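/- arXiv:1903.06977 — 8 statements merged into one kernel-verified Lean document; each statement's English description precedes it below -/
import Mathlib

section
/- Let T be the doubling map on [0,1) and μ Lebesgue measure. Let (B_m)_{m≥1} be a nested sequence of intervals with a fixed center whose lengths tend to 0. If there is a constant c ∈ ℝ such that μ(B_m) ≤ c/m for all m, then the set E_ah of eventually always hitting points has μ(E_ah) = 0. -/
open MeasureTheory Filter Set

/-- The set of eventually always hitting points: there is `m₀` such that for every
`m ≥ m₀` the orbit segment `x, T x, …, T^[m-1] x` meets `B m`. -/
def eahSet {X : Type*} (T : X → X) (B : ℕ → Set X) : Set X :=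
  {x | ∃ m₀ : ℕ, ∀ m : ℕ, m₀ ≤ m → ∃ k : ℕ, k < m ∧ T^[k] x ∈ B m}

/-- The doubling map `x ↦ 2x mod 1`. -/
noncomputable def doubling : ℝ → ℝ := fun x => Int.fract (2 * x)

open scoped ENNReal

namespace DEAH
-- assume part a exists; re-declare minimal needed
def cyl (t j : ℕ) : Set ℝ := Ico ((j:ℝ)/2^t) ((j+1)/2^t)
lemma mem_cyl_iff {t j : ℕ} {x : ℝ} : x ∈ cyl t j ↔ ⌊(2:ℝ)^t * x⌋ = (j:ℤ) := by
  have h2 : (0:ℝ) < 2^t := by positivity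
  rw [cyl, mem_Ico, Int.floor_eq_iff]
  constructor
  · rintro ⟨h1, h2'⟩
    refine ⟨?_, ?_⟩
    · push_cast; rw [div_le_iff₀ h2] at h1; linarith [h1]
    · push_cast; rw [lt_div_iff₀ h2] at h2'; linarith [h2']
  · rintro ⟨h1, h2'⟩
    push_cast at h1 h2'
    exact ⟨by rw [div_le_iff₀ h2]; linarith, by rw [lt_div_iff₀ h2]; linarith⟩
lemma cyl_subset_Ico {t j : ℕ} (hj : j < 2^t) : cyl t j ⊆ Ico (0:ℝ) 1 := by
  rintro x ⟨h1, h2⟩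
  have h2t : (0:ℝ) < 2^t := by positivity
  refine ⟨?_, ?_⟩
  · have : (0:ℝ) ≤ (j:ℝ)/2^t := by positivity
    linarith
  · have hj' : ((j:ℝ)+1) ≤ 2^t := by exact_mod_cast hj
    have : ((j:ℝ)+1)/2^t ≤ 1 := by rw [div_le_one h2t]; exact hj'
    linarith
lemma volume_cyl (t j : ℕ) : volume (cyl t j) = ENNReal.ofReal (((2:ℝ)^t)⁻¹) := by
  rw [cyl, Real.volume_Ico]; congr 1; field_simp; ring
lemma measurableSet_cyl (t j : ℕ) : MeasurableSet (cyl t j) := measurableSet_Ico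
lemma measurable_fract2 (n : ℕ) : Measurable fun x : ℝ => Int.fract (2^n * x) :=
  measurable_fract.comp (measurable_const_mul _)
lemma fract_mem_Ico (x : ℝ) : Int.fract x ∈ Ico (0:ℝ) 1 :=
  ⟨Int.fract_nonneg x, Int.fract_lt_one x⟩

lemma doubling_iterate_fract (k : ℕ) :
    ∀ x : ℝ, doubling^[k] (Int.fract x) = Int.fract (2^k * x) := by
  induction k with
  | zero => intro x; simp
  | succ k ih =>
    intro x
    have h1 : doubling (Int.fract x) = Int.fract (2 * x) := by
      have h2 : (2:ℝ) * Int.fract x = 2 * x - (2 * ⌊x⌋ : ℤ) := by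
        rw [Int.fract]; push_cast; ring
      rw [doubling, h2, Int.fract_sub_intCast]
    rw [Function.iterate_succ_apply, h1, ih (2 * x)]
    ring_nf

lemma doubling_iterate (k : ℕ) (x : ℝ) (hx : x ∈ Ico (0:ℝ) 1) :
    doubling^[k] x = Int.fract ((2:ℝ)^k * x) := by
  have h := doubling_iterate_fract k x
  rwa [Int.fract_eq_self.2 hx] at h
lemma volume_affine_preimage (t : ℕ) (b : ℝ) (G : Set ℝ) :
    volume ((fun x : ℝ => 2^t * x - b) ⁻¹' G) = ENNReal.ofReal (((2:ℝ)^t)⁻¹) * volume G := by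
  have h2 : ((2:ℝ)^t) ≠ 0 := by positivity
  have : (fun x : ℝ => 2^t * x - b) = (fun y : ℝ => -b + y) ∘ (fun x : ℝ => (2:ℝ)^t * x) := by
    funext x; simp; ring
  rw [this, Set.preimage_comp, Real.volume_preimage_mul_left h2, measure_preimage_add]
  congr 1
  rw [abs_of_pos]; positivity
-- END of re-declare

lemma floor_div_pow (x : ℝ) (d : ℕ) : ⌊x / 2^d⌋ = ⌊((⌊x⌋:ℝ)) / 2^d⌋ := by
  have h2 : (0:ℝ) < 2^d := by positivity
  set q := ⌊((⌊x⌋:ℝ)) / 2^d⌋ with hq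
  have hq1 : (q:ℝ) ≤ (⌊x⌋:ℝ) / 2^d := Int.floor_le _
  have hq2 : (⌊x⌋:ℝ) / 2^d < q + 1 := Int.lt_floor_add_one _
  rw [Int.floor_eq_iff]
  constructor
  · rw [le_div_iff₀ h2]
    have : (q:ℝ) * 2^d ≤ (⌊x⌋:ℝ) := by rw [← le_div_iff₀ h2]; exact hq1
    calc (q:ℝ) * 2^d ≤ (⌊x⌋:ℝ) := this
    _ ≤ x := Int.floor_le x
  · rw [div_lt_iff₀ h2]
    rw [div_lt_iff₀ h2] at hq2
    have hZ : ⌊x⌋ < (q+1) * 2^d := by exact_mod_cast hq2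
    have hZ' : ⌊x⌋ + 1 ≤ (q+1) * 2^d := hZ
    have h5 : x < (⌊x⌋:ℝ) + 1 := Int.lt_floor_add_one x
    have h4 : (⌊x⌋:ℝ) + 1 ≤ ((q:ℝ)+1) * 2^d := by exact_mod_cast hZ'
    linarith

lemma floor_scale_det {t t' : ℕ} (h : t ≤ t') {x z : ℝ}
    (hxz : ⌊(2:ℝ)^t' * x⌋ = ⌊(2:ℝ)^t' * z⌋) : ⌊(2:ℝ)^t * x⌋ = ⌊(2:ℝ)^t * z⌋ := by
  have hpow : (2:ℝ)^(t'-t) * 2^t = 2^t' := by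
    rw [← pow_add, Nat.sub_add_cancel h]
  have hx : (2:ℝ)^t * x = ((2:ℝ)^t' * x) / 2^(t'-t) := by
    rw [eq_div_iff (by positivity), ← hpow]; ring
  have hz : (2:ℝ)^t * z = ((2:ℝ)^t' * z) / 2^(t'-t) := by
    rw [eq_div_iff (by positivity), ← hpow]; ring
  rw [hx, hz, floor_div_pow ((2:ℝ)^t' * x) (t'-t), floor_div_pow ((2:ℝ)^t' * z) (t'-t), hxz]

lemma Ico_eq_biUnion_cyl (u : ℕ) :
    Ico (0:ℝ) 1 = ⋃ i ∈ Finset.range (2^u), cyl u i := by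
  ext x
  simp only [Finset.mem_range, mem_iUnion, exists_prop]
  constructor
  · rintro ⟨hx0, hx1⟩
    have h2 : (0:ℝ) < 2^u := by positivity
    have hfl0 : 0 ≤ ⌊(2:ℝ)^u * x⌋ := Int.floor_nonneg.2 (by positivity)
    have hflt : ⌊(2:ℝ)^u * x⌋ < (2^u : ℤ) := by
      rw [Int.floor_lt]
      push_cast
      nlinarith
    refine ⟨⌊(2:ℝ)^u * x⌋.toNat, ?_, ?_⟩
    · rw [← Int.toNat_of_nonneg hfl0] at hflt
      exact_mod_cast hflt
    · rw [mem_cyl_iff, Int.toNat_of_nonneg hfl0]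
  · rintro ⟨i, hi, hx⟩
    exact cyl_subset_Ico hi hx

/-- L5: the map `x ↦ fract(2^u x)` preserves Lebesgue on `[0,1)`. -/
lemma vol_fract_pre (u : ℕ) (F : Set ℝ) (hF : MeasurableSet F) :
    volume (Ico (0:ℝ) 1 ∩ (fun x => Int.fract ((2:ℝ)^u * x)) ⁻¹' F)
      = volume (F ∩ Ico (0:ℝ) 1) := by
  have hpiece : ∀ i : ℕ, cyl u i ∩ (fun x => Int.fract ((2:ℝ)^u * x)) ⁻¹' F
      = (fun x : ℝ => 2^u * x - (i:ℝ)) ⁻¹' (F ∩ Ico (0:ℝ) 1) := by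
    intro i
    ext x
    simp only [mem_inter_iff, mem_preimage, mem_cyl_iff]
    constructor
    · rintro ⟨hfl, hf⟩
      have hval : Int.fract ((2:ℝ)^u * x) = 2^u * x - (i:ℝ) := by
        rw [Int.fract, hfl]; push_cast; ring
      rw [← hval]
      exact ⟨hf, fract_mem_Ico _⟩
    · rintro ⟨hf, hIco⟩
      have hfl : ⌊(2:ℝ)^u * x⌋ = (i:ℤ) := by
        rw [Int.floor_eq_iff]
        rcases hIco with ⟨h1, h2⟩
        push_cast
        constructor <;> linarith
      have hval : Int.fract ((2:ℝ)^u * x) = 2^u * x - (i:ℝ) := by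
        rw [Int.fract, hfl]; push_cast; ring
      rw [hval]
      exact ⟨hfl, hf⟩
  have hdec : Ico (0:ℝ) 1 ∩ (fun x => Int.fract ((2:ℝ)^u * x)) ⁻¹' F
      = ⋃ i ∈ Finset.range (2^u), (cyl u i ∩ (fun x => Int.fract ((2:ℝ)^u * x)) ⁻¹' F) := by
    rw [Ico_eq_biUnion_cyl u]
    ext x; simp only [mem_inter_iff, mem_iUnion, exists_prop, Finset.mem_range]
    tauto
  rw [hdec, measure_biUnion_finset]
  · have : ∀ i ∈ Finset.range (2^u),
        volume (cyl u i ∩ (fun x => Int.fract ((2:ℝ)^u * x)) ⁻¹' F)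
          = ENNReal.ofReal (((2:ℝ)^u)⁻¹) * volume (F ∩ Ico (0:ℝ) 1) := by
      intro i _
      rw [hpiece i, volume_affine_preimage]
    rw [Finset.sum_congr rfl this, Finset.sum_const, Finset.card_range, nsmul_eq_mul]
    rw [← mul_assoc]
    have h1 : ((2^u : ℕ) : ℝ≥0∞) * ENNReal.ofReal (((2:ℝ)^u)⁻¹) = 1 := by
      have h2 : ((2^u : ℕ) : ℝ≥0∞) = ENNReal.ofReal ((2:ℝ)^u) := by
        rw [ENNReal.ofReal_pow (by norm_num)]
        norm_num
      rw [h2, ← ENNReal.ofReal_mul (by positivity)]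
      rw [mul_inv_cancel₀ (by positivity)]
      exact ENNReal.ofReal_one
    rw [h1, one_mul]
  · intro i _ j _ hij
    have : Disjoint (cyl u i) (cyl u j) := by
      rw [Set.disjoint_left]
      intro x hxi hxj
      rw [mem_cyl_iff] at hxi hxj
      exact hij (by exact_mod_cast hxi.symm.trans hxj)
    exact this.mono inter_subset_left inter_subset_left
  · intro i _
    exact (measurableSet_cyl u i).inter ((measurable_fract2 u) hF)

/-- L6 -/
lemma vol_cyl_fract_pre {t n : ℕ} (htn : t ≤ n) (j : ℕ) (F : Set ℝ) (hF : MeasurableSet F) :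
    volume (cyl t j ∩ (fun x => Int.fract ((2:ℝ)^n * x)) ⁻¹' F)
      = ENNReal.ofReal (((2:ℝ)^t)⁻¹) * volume (F ∩ Ico (0:ℝ) 1) := by
  have key : cyl t j ∩ (fun x => Int.fract ((2:ℝ)^n * x)) ⁻¹' F
      = (fun x : ℝ => 2^t * x - (j:ℝ)) ⁻¹'
          (Ico (0:ℝ) 1 ∩ (fun z => Int.fract ((2:ℝ)^(n-t) * z)) ⁻¹' F) := by
    ext x
    simp only [mem_inter_iff, mem_preimage, mem_cyl_iff]
    have hfr : Int.fract ((2:ℝ)^n * x) = Int.fract ((2:ℝ)^(n-t) * (2^t * x - (j:ℝ))) := by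
      have hpow : (2:ℝ)^(n-t) * 2^t = 2^n := by
        rw [← pow_add, Nat.sub_add_cancel htn]
      have : (2:ℝ)^(n-t) * (2^t * x - (j:ℝ)) = 2^n * x - ((2^(n-t) * j : ℕ) : ℤ) := by
        push_cast
        rw [← hpow]
        ring
      rw [this, Int.fract_sub_intCast]
    have hIff : ⌊(2:ℝ)^t * x⌋ = (j:ℤ) ↔ (2:ℝ)^t * x - j ∈ Ico (0:ℝ) 1 := by
      rw [Int.floor_eq_iff, mem_Ico]
      push_cast
      constructor <;> (rintro ⟨a, b⟩; constructor <;> linarith)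
    constructor
    · rintro ⟨hfl, hf⟩
      exact ⟨hIff.1 hfl, by rw [← hfr]; exact hf⟩
    · rintro ⟨hIco, hf⟩
      exact ⟨hIff.2 hIco, by rw [hfr]; exact hf⟩
  rw [key, volume_affine_preimage, vol_fract_pre _ _ hF]

/-- Dyadic-simple set of generation `t`. -/
def DS (t : ℕ) (S : Set ℝ) : Prop :=
  MeasurableSet S ∧ S ⊆ Ico (0:ℝ) 1 ∧
    ∀ x ∈ Ico (0:ℝ) 1, ∀ z ∈ Ico (0:ℝ) 1,
      ⌊(2:ℝ)^t * x⌋ = ⌊(2:ℝ)^t * z⌋ → x ∈ S → z ∈ S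

lemma DS_Ico (t : ℕ) : DS t (Ico (0:ℝ) 1) :=
  ⟨measurableSet_Ico, subset_rfl, fun _ _ z hz _ _ => hz⟩

lemma DS_mono {t t' : ℕ} (h : t ≤ t') {S : Set ℝ} (hS : DS t S) : DS t' S :=
  ⟨hS.1, hS.2.1, fun x hx z hz hfl hxS => hS.2.2 x hx z hz (floor_scale_det h hfl) hxS⟩

lemma DS_inter {t : ℕ} {S S' : Set ℝ} (hS : DS t S) (hS' : DS t S') : DS t (S ∩ S') :=
  ⟨hS.1.inter hS'.1, fun x hx => hS.2.1 hx.1, fun x hx z hz hfl hxS =>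
    ⟨hS.2.2 x hx z hz hfl hxS.1, hS'.2.2 x hx z hz hfl hxS.2⟩⟩

lemma DS_diff {t : ℕ} {S S' : Set ℝ} (hS : DS t S) (hS' : DS t S') : DS t (S \ S') :=
  ⟨hS.1.diff hS'.1, fun x hx => hS.2.1 hx.1, fun x hx z hz hfl hxS =>
    ⟨hS.2.2 x hx z hz hfl hxS.1, fun hzS' => hxS.2 (hS'.2.2 z hz x hx hfl.symm hzS')⟩⟩

lemma DS_cyl_pair (s k : ℕ) : DS s ((cyl s k ∪ cyl s (k+1)) ∩ Ico (0:ℝ) 1) := by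
  refine ⟨((measurableSet_cyl s k).union (measurableSet_cyl s (k+1))).inter measurableSet_Ico,
    fun x hx => hx.2, ?_⟩
  intro x hx z hz hfl hxS
  refine ⟨?_, hz⟩
  rcases hxS.1 with h | h
  · left; rw [mem_cyl_iff] at h ⊢; rw [← hfl]; exact h
  · right; rw [mem_cyl_iff] at h ⊢; rw [← hfl]; exact h

lemma DS_pre {u : ℕ} {S : Set ℝ} (hS : DS u S) (i : ℕ) :
    DS (i + u) (Ico (0:ℝ) 1 ∩ (fun x => Int.fract ((2:ℝ)^i * x)) ⁻¹' S) := by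
  refine ⟨measurableSet_Ico.inter ((measurable_fract2 i) hS.1), fun x hx => hx.1, ?_⟩
  intro x hx z hz hfl hxS
  refine ⟨hz, ?_⟩
  have hfli : ⌊(2:ℝ)^i * x⌋ = ⌊(2:ℝ)^i * z⌋ := floor_scale_det (Nat.le_add_right i u) hfl
  have key : ∀ w : ℝ, ⌊(2:ℝ)^u * Int.fract ((2:ℝ)^i * w)⌋
      = ⌊(2:ℝ)^(i+u) * w⌋ - 2^u * ⌊(2:ℝ)^i * w⌋ := by
    intro w
    have h1 : (2:ℝ)^u * Int.fract ((2:ℝ)^i * w)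
        = (2:ℝ)^(i+u) * w - ((2^u * ⌊(2:ℝ)^i * w⌋ : ℤ) : ℝ) := by
      rw [Int.fract]
      push_cast
      rw [pow_add]
      ring
    rw [h1, Int.floor_sub_intCast]
  have hflu : ⌊(2:ℝ)^u * Int.fract ((2:ℝ)^i * x)⌋ = ⌊(2:ℝ)^u * Int.fract ((2:ℝ)^i * z)⌋ := by
    rw [key x, key z, hfl, hfli]
  exact hS.2.2 _ (fract_mem_Ico _) _ (fract_mem_Ico _) hflu hxS.2

/-- L7: independence of a generation-`t` simple set from the `n`-shifted future, `t ≤ n`. -/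
lemma DS_indep {t n : ℕ} (htn : t ≤ n) {S : Set ℝ} (hS : DS t S)
    {F : Set ℝ} (hF : MeasurableSet F) :
    volume (S ∩ (fun x => Int.fract ((2:ℝ)^n * x)) ⁻¹' F)
      = volume S * volume (F ∩ Ico (0:ℝ) 1) := by
  classical
  set A : Finset ℕ := (Finset.range (2^t)).filter (fun j => ((j:ℝ)/2^t) ∈ S) with hA
  have hcylmem : ∀ j : ℕ, ((j:ℝ)/2^t) ∈ cyl t j := by
    intro j
    rw [mem_cyl_iff]
    have h2 : ((2:ℝ)^t) ≠ 0 := by positivity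
    rw [mul_div_cancel₀ _ h2]
    exact Int.floor_natCast j
  have hSA : S = ⋃ j ∈ A, cyl t j := by
    ext x
    simp only [mem_iUnion, exists_prop, hA, Finset.mem_filter, Finset.mem_range]
    constructor
    · intro hxS
      have hx : x ∈ Ico (0:ℝ) 1 := hS.2.1 hxS
      have hfl0 : 0 ≤ ⌊(2:ℝ)^t * x⌋ := Int.floor_nonneg.2 (by nlinarith [hx.1, pow_pos (show (0:ℝ)<2 by norm_num) t])
      have hflt : ⌊(2:ℝ)^t * x⌋ < (2^t : ℤ) := by
        rw [Int.floor_lt]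
        push_cast
        nlinarith [hx.2, pow_pos (show (0:ℝ)<2 by norm_num) t]
      set j : ℕ := ⌊(2:ℝ)^t * x⌋.toNat with hj
      have hjlt : j < 2^t := by
        have h' : (j : ℤ) < 2^t := by rw [hj, Int.toNat_of_nonneg hfl0]; exact hflt
        exact_mod_cast h'
      have hxcyl : x ∈ cyl t j := by
        rw [mem_cyl_iff, hj, Int.toNat_of_nonneg hfl0]
      have hzIco : ((j:ℝ)/2^t) ∈ Ico (0:ℝ) 1 := cyl_subset_Ico hjlt (hcylmem j)
      have hflz : ⌊(2:ℝ)^t * x⌋ = ⌊(2:ℝ)^t * ((j:ℝ)/2^t)⌋ := by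
        rw [(mem_cyl_iff.1 (hcylmem j) : _), hj, Int.toNat_of_nonneg hfl0]
      refine ⟨j, ⟨hjlt, hS.2.2 x hx _ hzIco hflz hxS⟩, hxcyl⟩
    · rintro ⟨j, ⟨hjlt, hjS⟩, hxcyl⟩
      have hx : x ∈ Ico (0:ℝ) 1 := cyl_subset_Ico hjlt hxcyl
      have hzIco : ((j:ℝ)/2^t) ∈ Ico (0:ℝ) 1 := cyl_subset_Ico hjlt (hcylmem j)
      have hflz : ⌊(2:ℝ)^t * ((j:ℝ)/2^t)⌋ = ⌊(2:ℝ)^t * x⌋ := by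
        rw [(mem_cyl_iff.1 (hcylmem j) : _), (mem_cyl_iff.1 hxcyl : _)]
      exact hS.2.2 _ hzIco x hx hflz hjS
  have hdisj : (↑A : Set ℕ).PairwiseDisjoint (fun j => cyl t j) := by
    intro i _ j _ hij
    rw [Function.onFun, Set.disjoint_left]
    intro x hxi hxj
    rw [mem_cyl_iff] at hxi hxj
    exact hij (by exact_mod_cast hxi.symm.trans hxj)
  have hdisj2 : (↑A : Set ℕ).PairwiseDisjoint
      (fun j => cyl t j ∩ (fun x => Int.fract ((2:ℝ)^n * x)) ⁻¹' F) :=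
    fun i hi j hj hij => ((hdisj hi hj hij).mono inter_subset_left inter_subset_left)
  have hvolS : volume S = A.card * ENNReal.ofReal (((2:ℝ)^t)⁻¹) := by
    rw [hSA, measure_biUnion_finset hdisj (fun j _ => measurableSet_cyl t j)]
    rw [Finset.sum_congr rfl (fun j _ => volume_cyl t j), Finset.sum_const, nsmul_eq_mul]
  have hinter : S ∩ (fun x => Int.fract ((2:ℝ)^n * x)) ⁻¹' F
      = ⋃ j ∈ A, (cyl t j ∩ (fun x => Int.fract ((2:ℝ)^n * x)) ⁻¹' F) := by
    rw [hSA]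
    ext x
    simp only [mem_inter_iff, mem_iUnion, exists_prop]
    tauto
  rw [hinter, measure_biUnion_finset hdisj2
    (fun j _ => (measurableSet_cyl t j).inter ((measurable_fract2 n) hF))]
  rw [Finset.sum_congr rfl (fun j _ => vol_cyl_fract_pre htn j F hF), Finset.sum_const,
    nsmul_eq_mul, hvolS]
  ring

/-- Survivor sets. -/
def Sig (J : Set ℝ) (i : ℕ) : Set ℝ :=
  Ico (0:ℝ) 1 ∩ ⋂ j ∈ Finset.range i, (fun x => Int.fract ((2:ℝ)^j * x)) ⁻¹' (Ico (0:ℝ) 1 \ J)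

lemma Sig_zero (J : Set ℝ) : Sig J 0 = Ico (0:ℝ) 1 := by
  simp [Sig]

lemma Sig_succ (J : Set ℝ) (i : ℕ) :
    Sig J (i+1) = Sig J i ∩
      (Ico (0:ℝ) 1 ∩ (fun x => Int.fract ((2:ℝ)^i * x)) ⁻¹' (Ico (0:ℝ) 1 \ J)) := by
  ext x
  simp only [Sig, mem_inter_iff, mem_iInter, Finset.mem_range, mem_preimage]
  constructor
  · intro ⟨h1, h2⟩
    exact ⟨⟨h1, fun j hj => h2 j (by omega)⟩, h1, h2 i (by omega)⟩
  · intro ⟨⟨h1, h2⟩, _, h3⟩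
    refine ⟨h1, fun j hj => ?_⟩
    rcases Nat.lt_succ_iff_lt_or_eq.1 hj with h | h
    · exact h2 j h
    · rw [h]; exact h3

lemma Sig_anti (J : Set ℝ) : ∀ {i i' : ℕ}, i ≤ i' → Sig J i' ⊆ Sig J i := by
  intro i i' h
  intro x hx
  refine ⟨hx.1, ?_⟩
  have := hx.2
  simp only [mem_iInter, Finset.mem_range] at this ⊢
  exact fun j hj => this j (lt_of_lt_of_le hj h)

lemma Sig_DS {J : Set ℝ} {s : ℕ} (hJ : DS s J) : ∀ i, DS (i + s) (Sig J i) := by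
  intro i
  induction i with
  | zero => rw [Sig_zero]; exact DS_mono (by omega) (DS_Ico s)
  | succ i ih =>
    rw [Sig_succ]
    refine DS_mono (by omega) (DS_inter ih (DS_pre (DS_diff (DS_Ico s) hJ) i))

lemma Sig_DS' {J : Set ℝ} {s : ℕ} (hJ : DS s J) (i : ℕ) : DS i (Sig J (i - s)) := by
  rcases Nat.lt_or_ge i s with h | h
  · have h0 : i - s = 0 := by omega
    rw [h0, Sig_zero]
    exact DS_Ico i
  · have h2 := Sig_DS hJ (i - s)
    have h3 : (i - s) + s = i := by omega
    rwa [h3] at h2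

lemma Sig_measurable {J : Set ℝ} (hJ : MeasurableSet J) (i : ℕ) : MeasurableSet (Sig J i) := by
  refine measurableSet_Ico.inter (MeasurableSet.biInter (Set.to_countable _) ?_)
  exact fun j _ => (measurable_fract2 j) (measurableSet_Ico.diff hJ)

lemma Sig_vol_le_one {J : Set ℝ} (i : ℕ) : volume (Sig J i) ≤ 1 := by
  calc volume (Sig J i) ≤ volume (Ico (0:ℝ) 1) := measure_mono inter_subset_left
  _ = 1 := by rw [Real.volume_Ico]; norm_num

/-- The key recursion inequality. -/
lemma Sig_rec {J : Set ℝ} {s : ℕ} (hJ : DS s J) (i : ℕ) :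
    volume (Sig J i) ≤ volume (Sig J (i+1)) + volume (Sig J (i - s)) * volume J := by
  have hJmeas : MeasurableSet J := hJ.1
  have hsplit : Sig J i = Sig J (i+1) ∪
      (Sig J i ∩ (fun x => Int.fract ((2:ℝ)^i * x)) ⁻¹' J) := by
    ext x
    rw [Sig_succ]
    simp only [mem_union, mem_inter_iff, mem_preimage]
    constructor
    · intro hx
      by_cases hJx : Int.fract ((2:ℝ)^i * x) ∈ J
      · exact Or.inr ⟨hx, hJx⟩
      · exact Or.inl ⟨hx, hx.1, fract_mem_Ico _, hJx⟩
    · rintro (hx | hx)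
      · exact hx.1
      · exact hx.1
  have h1 : volume (Sig J i) ≤ volume (Sig J (i+1))
      + volume (Sig J i ∩ (fun x => Int.fract ((2:ℝ)^i * x)) ⁻¹' J) := by
    conv_lhs => rw [hsplit]
    apply measure_union_le
  have h2 : volume (Sig J i ∩ (fun x => Int.fract ((2:ℝ)^i * x)) ⁻¹' J)
      ≤ volume (Sig J (i - s) ∩ (fun x => Int.fract ((2:ℝ)^i * x)) ⁻¹' J) :=
    measure_mono (inter_subset_inter_left _ (Sig_anti J (Nat.sub_le i s)))
  have h3 : volume (Sig J (i - s) ∩ (fun x => Int.fract ((2:ℝ)^i * x)) ⁻¹' J)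
      = volume (Sig J (i - s)) * volume (J ∩ Ico (0:ℝ) 1) :=
    DS_indep le_rfl (Sig_DS' hJ i) hJmeas
  have h4 : J ∩ Ico (0:ℝ) 1 = J := inter_eq_self_of_subset_left hJ.2.1
  rw [h4] at h3
  calc volume (Sig J i) ≤ volume (Sig J (i+1))
      + volume (Sig J i ∩ (fun x => Int.fract ((2:ℝ)^i * x)) ⁻¹' J) := h1
  _ ≤ volume (Sig J (i+1)) + volume (Sig J (i - s)) * volume J :=
      add_le_add le_rfl (le_trans h2 (le_of_eq h3))

/-- Real-valued survival recursion bound. -/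
lemma rec_bound (b : ℕ → ℝ) (p q : ℝ) (s : ℕ)
    (hp0 : 0 ≤ p) (hq0 : 0 ≤ q) (hq1 : q ≤ 1/2)
    (hpq : p ≤ q * (1-q)^s)
    (hb0 : b 0 = 1) (hbnn : ∀ i, 0 ≤ b i)
    (hrec : ∀ i, b i - p * b (i - s) ≤ b (i+1)) :
    ∀ i, (1-q)^i ≤ b i := by
  have hq1' : 0 ≤ 1 - q := by linarith
  have H : ∀ i, (1-q) * b i ≤ b (i+1) := by
    intro i
    induction i using Nat.strong_induction_on with
    | _ i IH =>
      have chain : ∀ d, ∀ v, d ≤ v → v ≤ i → (1-q)^d * b (v - d) ≤ b v := by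
        intro d
        induction d with
        | zero => intro v _ _; simp
        | succ d ihd =>
          intro v hdv hvi
          have hv1 : 1 ≤ v := by omega
          have step : (1-q) * b (v-1) ≤ b v := by
            have := IH (v-1) (by omega)
            have hv : (v-1) + 1 = v := by omega
            rwa [hv] at this
          have hsub : v - (d+1) = (v-1) - d := by omega
          calc (1-q)^(d+1) * b (v - (d+1)) = (1-q) * ((1-q)^d * b ((v-1) - d)) := by
                rw [hsub, pow_succ]; ring
          _ ≤ (1-q) * b (v-1) := by
                apply mul_le_mul_of_nonneg_left (ihd (v-1) (by omega) (by omega)) hq1'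
          _ ≤ b v := step
      have hd : i - (i - s) ≤ s := by omega
      set d := i - (i - s) with hdd
      have hch : (1-q)^d * b (i - d) ≤ b i := by
        rcases Nat.eq_zero_or_pos i with h0 | hpos
        · subst h0; simp [hdd]
        · exact chain d i (by omega) le_rfl
      have hid : i - d = i - s := by omega
      rw [hid] at hch
      have key : p * b (i - s) ≤ q * b i := by
        have h1 : p * b (i - s) ≤ q * (1-q)^s * b (i - s) :=
          mul_le_mul_of_nonneg_right hpq (hbnn _)
        have h2 : (1-q)^s = (1-q)^(s-d) * (1-q)^d := by
          rw [← pow_add]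
          congr 1
          omega
        have h3 : q * (1-q)^s * b (i - s) = q * (1-q)^(s-d) * ((1-q)^d * b (i - s)) := by
          rw [h2]; ring
        have h4 : q * (1-q)^(s-d) * ((1-q)^d * b (i - s)) ≤ q * (1-q)^(s-d) * b i :=
          mul_le_mul_of_nonneg_left hch (by positivity)
        have h5 : q * (1-q)^(s-d) * b i ≤ q * 1 * b i := by
          apply mul_le_mul_of_nonneg_right _ (hbnn i)
          apply mul_le_mul_of_nonneg_left _ hq0
          exact pow_le_one₀ hq1' (by linarith)
        calc p * b (i - s) ≤ q * (1-q)^s * b (i - s) := h1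
        _ = q * (1-q)^(s-d) * ((1-q)^d * b (i - s)) := h3
        _ ≤ q * (1-q)^(s-d) * b i := h4
        _ ≤ q * b i := by linarith [h5]
      have := hrec i
      linarith
  intro i
  induction i with
  | zero => rw [hb0]; norm_num
  | succ i ih =>
    calc (1-q)^(i+1) = (1-q) * (1-q)^i := by rw [pow_succ]; ring
    _ ≤ (1-q) * b i := mul_le_mul_of_nonneg_left ih hq1'
    _ ≤ b (i+1) := H i

lemma eight_mul_le_two_pow : ∀ s : ℕ, 6 ≤ s → 8 * s ≤ 2^s := by
  intro s hs
  induction s with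
  | zero => omega
  | succ s ih =>
    rcases Nat.lt_or_ge s 6 with h | h
    · have h5 : s = 5 := by omega
      subst h5; norm_num
    · have h8 : 8 ≤ 2^s := by
        calc (8:ℕ) ≤ 2^6 := by norm_num
        _ ≤ 2^s := Nat.pow_le_pow_right (by norm_num) h
      have := ih (by omega)
      calc 8 * (s+1) = 8*s + 8 := by ring
      _ ≤ 2^s + 2^s := by omega
      _ = 2^(s+1) := by ring

lemma pow_half_bound {s : ℕ} (hs : 6 ≤ s) {q : ℝ} (hq0 : 0 ≤ q)
    (hq : q ≤ 4 * ((2:ℝ)^s)⁻¹) : (1/2 : ℝ) ≤ (1-q)^s := by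
  have h2s : (0:ℝ) < 2^s := by positivity
  have hber : 1 + (s:ℝ) * (-q) ≤ (1 + (-q))^s := by
    apply one_add_mul_le_pow
    have : q ≤ 4 * ((2:ℝ)^6)⁻¹ := by
      apply hq.trans
      have : ((2:ℝ)^6) ≤ 2^s := by
        apply pow_le_pow_right₀ (by norm_num) hs
      gcongr
    norm_num at this
    linarith
  have h8s : (8:ℝ) * s ≤ 2^s := by exact_mod_cast eight_mul_le_two_pow s hs
  have hsq : (s:ℝ) * q ≤ 1/2 := by
    have h1 : (s:ℝ) * q ≤ (s:ℝ) * (4 * ((2:ℝ)^s)⁻¹) :=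
      mul_le_mul_of_nonneg_left hq (Nat.cast_nonneg s)
    have h2 : (s:ℝ) * (4 * ((2:ℝ)^s)⁻¹) ≤ 1/2 := by
      have he : (s:ℝ) * (4 * ((2:ℝ)^s)⁻¹) = (4 * s) / 2^s := by
        field_simp
      rw [he, div_le_iff₀ h2s]
      nlinarith
    linarith
  have : 1 + (-q) = 1 - q := by ring
  rw [this] at hber
  have : 1 + (s:ℝ) * (-q) = 1 - s*q := by ring
  rw [this] at hber
  linarith

lemma exp_le_one_sub {q : ℝ} (hq0 : 0 ≤ q) (hq1 : q ≤ 1/2) :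
    Real.exp (-(2*q)) ≤ 1 - q := by
  have h2 : (0:ℝ) < 1 + 2*q := by linarith
  have h1 : 1 + 2*q ≤ Real.exp (2*q) := by
    have := Real.add_one_le_exp (2*q)
    linarith
  have h3 : Real.exp (-(2*q)) = (Real.exp (2*q))⁻¹ := by
    rw [← Real.exp_neg]
  have h4 : (Real.exp (2*q))⁻¹ ≤ (1+2*q)⁻¹ := by
    apply inv_anti₀ h2 h1
  have h5 : (1+2*q)⁻¹ ≤ 1 - q := by
    rw [← one_div, div_le_iff₀ h2]
    nlinarith
  linarith

section Main

variable {y c : ℝ} {r : ℕ → ℝ} {B : ℕ → Set ℝ}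

set_option maxHeartbeats 2000000 in
lemma key_step
    (hr0 : ∀ m, 0 ≤ r m) (hmono : Antitone r)
    (hrlim : Tendsto r atTop (nhds 0))
    (hB : ∀ m, B m = Metric.ball y (r m) ∩ Set.Ico (0 : ℝ) 1)
    (hc : ∀ m : ℕ, 1 ≤ m →
      (volume.restrict (Set.Ico (0 : ℝ) 1)) (B m) ≤ ENNReal.ofReal (c / m))
    (hne : ∀ m : ℕ, 1 ≤ m → (B m).Nonempty)
    (hc0 : 0 < c)
    (hBmeas : ∀ m, MeasurableSet (B m))
    (hEAmeas : MeasurableSet (eahSet doubling B))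
    (m₀ : ℕ) :
    volume ({x | ∀ m', m₀ ≤ m' → ∃ k, k < m' ∧ doubling^[k] x ∈ B m'} ∩ Ico (0:ℝ) 1)
      + ENNReal.ofReal (Real.exp (-(16*c))) * volume (eahSet doubling B ∩ Ico (0:ℝ) 1)
      ≤ volume (eahSet doubling B ∩ Ico (0:ℝ) 1) := by
  classical
  have hBsub : ∀ m, B m ⊆ Ico (0:ℝ) 1 := fun m => by rw [hB m]; exact inter_subset_right
  have hBanti : ∀ {a b : ℕ}, a ≤ b → B b ⊆ B a := by
    intro a b hab
    rw [hB a, hB b]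
    exact inter_subset_inter_left _ (Metric.ball_subset_ball (hmono hab))
  -- choice of m
  set M : ℕ := ⌈(128:ℝ)*c⌉₊ + 1 with hM
  set m : ℕ := max (max m₀ M) 1 with hmdef
  have hm1 : 1 ≤ m := le_max_right _ 1
  have hmm₀ : m₀ ≤ m := le_trans (le_max_left m₀ M) (le_max_left _ 1)
  have hmM : M ≤ m := le_trans (le_max_right m₀ M) (le_max_left _ 1)
  have hm0R : (0:ℝ) < m := by exact_mod_cast hm1
  -- the target interval geometry
  set L : ℝ := max 0 (y - r m) with hLdef
  set U : ℝ := min 1 (y + r m) with hUdef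
  have hBIoo : B m = Ioo (y - r m) (y + r m) ∩ Ico (0:ℝ) 1 := by
    rw [hB m, Real.ball_eq_Ioo]
  have hBIcc : B m ⊆ Icc L U := by
    intro x hx
    rw [hBIoo] at hx
    obtain ⟨⟨h1, h2⟩, h3, h4⟩ := hx
    exact ⟨max_le h3 h1.le, le_min h4.le h2.le⟩
  have hIooB : Ioo L U ⊆ B m := by
    rintro z ⟨h1, h2⟩
    rw [hBIoo]
    rw [max_lt_iff] at h1
    rw [lt_min_iff] at h2
    exact ⟨⟨h1.2, h2.2⟩, h1.1.le, h2.1⟩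
  have hLU : L < U := by
    obtain ⟨x, hx⟩ := hne m hm1
    rw [hBIoo] at hx
    obtain ⟨⟨h1, h2⟩, h3, h4⟩ := hx
    calc L ≤ x := max_le h3 h1.le
    _ < U := lt_min h4 h2
  set ε : ℝ := U - L with hεdef
  have hε : 0 < ε := by simp [hεdef]; linarith
  have hL0 : 0 ≤ L := le_max_left _ _
  have hU1 : U ≤ 1 := min_le_left _ _
  have hε1 : ε ≤ 1 := by simp [hεdef]; linarith
  have hvolB : volume (B m) = ENNReal.ofReal ε := by
    apply le_antisymm
    · calc volume (B m) ≤ volume (Icc L U) := measure_mono hBIcc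
      _ = ENNReal.ofReal ε := by rw [Real.volume_Icc]
    · calc ENNReal.ofReal ε = volume (Ioo L U) := by rw [Real.volume_Ioo]
      _ ≤ volume (B m) := measure_mono hIooB
  have hεc : ε ≤ c / m := by
    have h1 := hc m hm1
    rw [Measure.restrict_apply (hBmeas m), inter_eq_self_of_subset_left (hBsub m), hvolB] at h1
    rw [ENNReal.ofReal_le_ofReal_iff (by positivity)] at h1
    exact h1
  have hε128 : ε ≤ 1/128 := by
    have hM128 : (128:ℝ) * c ≤ M := by
      calc (128:ℝ)*c ≤ ⌈(128:ℝ)*c⌉₊ := Nat.le_ceil _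
      _ ≤ M := by exact_mod_cast Nat.le_succ _
    have hMm : (M:ℝ) ≤ m := by exact_mod_cast hmM
    have : (128:ℝ) * c ≤ m := le_trans hM128 hMm
    calc ε ≤ c/m := hεc
    _ ≤ 1/128 := by
        rw [div_le_div_iff₀ hm0R (by norm_num)]
        linarith
  -- choice of s
  have hsex : ∃ n : ℕ, ((2:ℝ)^(n+1))⁻¹ < ε := by
    obtain ⟨n, hn⟩ := exists_pow_lt_of_lt_one hε (show (1:ℝ)/2 < 1 by norm_num)
    refine ⟨n, lt_of_le_of_lt ?_ hn⟩
    rw [div_pow, one_pow]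
    rw [one_div]
    apply inv_anti₀ (by positivity)
    apply pow_le_pow_right₀ (by norm_num)
    omega
  set s : ℕ := Nat.find hsex with hsdef
  have hs1 : ((2:ℝ)^(s+1))⁻¹ < ε := Nat.find_spec hsex
  have hs2 : ε ≤ ((2:ℝ)^s)⁻¹ := by
    rcases Nat.eq_zero_or_pos s with h0 | hpos
    · rw [h0]; simpa using hε1
    · have := Nat.find_min hsex (show s - 1 < s by omega)
      push_neg at this
      have hss : s - 1 + 1 = s := by omega
      rwa [hss] at this
  have hs7 : 7 ≤ s := by
    by_contra hcon
    push_neg at hcon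
    have h1 : ((2:ℝ)^(s+1))⁻¹ ≥ (2^7 : ℝ)⁻¹ := by
      apply inv_anti₀ (by positivity)
      apply pow_le_pow_right₀ (by norm_num)
      omega
    have : ((2:ℝ)^7)⁻¹ < 1/128 := lt_of_lt_of_le (lt_of_le_of_lt h1 hs1) hε128
    norm_num at this
  -- the union-of-two-cylinders cover J
  set k : ℕ := ⌊(2:ℝ)^s * L⌋.toNat with hkdef
  set J : Set ℝ := (cyl s k ∪ cyl s (k+1)) ∩ Ico (0:ℝ) 1 with hJdef
  have hJDS : DS s J := DS_cyl_pair s k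
  have h2s : (0:ℝ) < 2^s := by positivity
  have hk0 : (0:ℤ) ≤ ⌊(2:ℝ)^s * L⌋ := Int.floor_nonneg.2 (by positivity)
  have hkZ : ((k:ℕ):ℤ) = ⌊(2:ℝ)^s * L⌋ := by rw [hkdef]; exact Int.toNat_of_nonneg hk0
  have hkfl : (k:ℝ) ≤ (2:ℝ)^s * L := by
    have h3 : (((k:ℕ):ℤ):ℝ) ≤ 2^s * L := by rw [hkZ]; exact Int.floor_le _
    exact_mod_cast h3
  have hkfl2 : (2:ℝ)^s * L < (k:ℝ) + 1 := by
    have h3 : (2:ℝ)^s * L < (((k:ℕ):ℤ):ℝ) + 1 := by rw [hkZ]; exact Int.lt_floor_add_one _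
    exact_mod_cast h3
  have hBJ : B m ⊆ J := by
    intro x hx
    have hxIcc := hBIcc hx
    have hxIco := hBsub m hx
    refine ⟨?_, hxIco⟩
    have hx1 : (k:ℝ)/2^s ≤ x := by
      rw [div_le_iff₀ h2s]
      calc (k:ℝ) ≤ 2^s * L := hkfl
      _ ≤ 2^s * x := by nlinarith [hxIcc.1]
      _ = x * 2^s := by ring
    have hx2 : x < ((k:ℝ)+2)/2^s := by
      rw [lt_div_iff₀ h2s]
      have hxU : x ≤ L + ε := by
        have := hxIcc.2
        simp only [hεdef]
        linarith
      have hεs : ε ≤ ((2:ℝ)^s)⁻¹ := hs2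
      have : x * 2^s ≤ (L + ε) * 2^s := by nlinarith
      calc x * 2^s ≤ (L + ε) * 2^s := this
      _ = L * 2^s + ε * 2^s := by ring
      _ < ((k:ℝ)+1) + 1 := by
          have h1 : L * 2^s < (k:ℝ)+1 := by nlinarith [hkfl2]
          have h2 : ε * 2^s ≤ 1 := by
            calc ε * 2^s ≤ ((2:ℝ)^s)⁻¹ * 2^s := by nlinarith
            _ = 1 := by field_simp
          linarith
      _ = (k:ℝ)+2 := by ring
    have e1 : (k:ℝ)/2^s ≤ ((k:ℝ)+1)/2^s := by
      rw [div_le_div_iff₀ h2s h2s]; nlinarith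
    have e2 : ((k:ℝ)+1)/2^s ≤ ((k:ℝ)+1+1)/2^s := by
      rw [div_le_div_iff₀ h2s h2s]; nlinarith
    have hcup : cyl s k ∪ cyl s (k+1) = Ico ((k:ℝ)/2^s) (((k:ℝ)+1+1)/2^s) := by
      rw [cyl, cyl]
      push_cast
      rw [Ico_union_Ico_eq_Ico e1 e2]
    rw [hcup]
    refine ⟨hx1, ?_⟩
    have : ((k:ℝ)+1+1) = (k:ℝ)+2 := by ring
    rw [this]
    exact hx2
  -- p, q and the survival bound
  have hJsub : J ⊆ Ico (0:ℝ) 1 := inter_subset_right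
  have hIcovol : volume (Ico (0:ℝ) 1) = 1 := by rw [Real.volume_Ico]; norm_num
  have hJle1 : volume J ≤ 1 := by
    calc volume J ≤ volume (Ico (0:ℝ) 1) := measure_mono hJsub
    _ = 1 := hIcovol
  have hJfin : volume J ≠ ⊤ := ne_top_of_le_ne_top ENNReal.one_ne_top hJle1
  have hJvol : volume J ≤ ENNReal.ofReal (2 * ((2:ℝ)^s)⁻¹) := by
    calc volume J ≤ volume (cyl s k ∪ cyl s (k+1)) := measure_mono inter_subset_left
    _ ≤ volume (cyl s k) + volume (cyl s (k+1)) := measure_union_le _ _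
    _ = ENNReal.ofReal (2 * ((2:ℝ)^s)⁻¹) := by
        rw [volume_cyl, volume_cyl, ← ENNReal.ofReal_add (by positivity) (by positivity)]
        congr 1
        ring
  set p : ℝ := (volume J).toReal with hpdef
  have hp0 : 0 ≤ p := ENNReal.toReal_nonneg
  have hp2 : p ≤ 2 * ((2:ℝ)^s)⁻¹ := ENNReal.toReal_le_of_le_ofReal (by positivity) hJvol
  set q : ℝ := 2 * p with hqdef
  have hq0 : 0 ≤ q := by positivity
  have hq4 : q ≤ 4 * ((2:ℝ)^s)⁻¹ := by rw [hqdef]; linarith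
  have hq12 : q ≤ 1/2 := by
    have h1 : ((2:ℝ)^s)⁻¹ ≤ ((2:ℝ)^7)⁻¹ := by
      apply inv_anti₀ (by positivity)
      apply pow_le_pow_right₀ (by norm_num) hs7
    have : ((2:ℝ)^7)⁻¹ = 1/128 := by norm_num
    rw [this] at h1
    calc q ≤ 4 * ((2:ℝ)^s)⁻¹ := hq4
    _ ≤ 4 * (1/128) := by linarith
    _ ≤ 1/2 := by norm_num
  have hhalf : (1/2 : ℝ) ≤ (1-q)^s := pow_half_bound (by omega) hq0 hq4
  have hpq : p ≤ q * (1-q)^s := by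
    calc p = 2 * p * (1/2) := by ring
    _ ≤ 2 * p * (1-q)^s := by
        apply mul_le_mul_of_nonneg_left hhalf (by positivity)
    _ = q * (1-q)^s := by rw [hqdef]
  set b : ℕ → ℝ := fun i => (volume (Sig J i)).toReal with hbdef
  have hSfin : ∀ i, volume (Sig J i) ≠ ⊤ :=
    fun i => ne_top_of_le_ne_top ENNReal.one_ne_top (Sig_vol_le_one i)
  have hb0 : b 0 = 1 := by
    rw [hbdef]
    simp only [Sig_zero, hIcovol, ENNReal.toReal_one]
  have hbnn : ∀ i, 0 ≤ b i := fun i => ENNReal.toReal_nonneg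
  have hrec : ∀ i, b i - p * b (i - s) ≤ b (i + 1) := by
    intro i
    have h := Sig_rec hJDS i
    have hfin2 : volume (Sig J (i - s)) * volume J ≠ ⊤ := ENNReal.mul_ne_top (hSfin _) hJfin
    have h2 : (volume (Sig J i)).toReal
        ≤ (volume (Sig J (i+1)) + volume (Sig J (i - s)) * volume J).toReal :=
      ENNReal.toReal_mono (ENNReal.add_ne_top.2 ⟨hSfin _, hfin2⟩) h
    rw [ENNReal.toReal_add (hSfin _) hfin2, ENNReal.toReal_mul] at h2
    have hb1 : b i ≤ b (i+1) + b (i - s) * p := h2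
    nlinarith [hb1]
  have hbm : (1-q)^m ≤ b m := rec_bound b p q s hp0 hq0 hq12 hpq hb0 hbnn hrec m
  have hq8ε : q ≤ 8 * ε := by
    have he : 4 * ((2:ℝ)^s)⁻¹ = 8 * ((2:ℝ)^(s+1))⁻¹ := by
      rw [pow_succ]
      field_simp
      ring
    have h8 : 8 * ((2:ℝ)^(s+1))⁻¹ ≤ 8 * ε := by linarith [hs1]
    linarith [hq4]
  have hεm : ε * m ≤ c := by
    rw [le_div_iff₀ hm0R] at hεc
    exact hεc
  have hqm : q * m ≤ 8 * c := by
    calc q * m ≤ 8 * ε * m := by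
          apply mul_le_mul_of_nonneg_right hq8ε (le_of_lt hm0R)
    _ = 8 * (ε * m) := by ring
    _ ≤ 8 * c := by linarith
  have hexp : Real.exp (-(16*c)) ≤ b m := by
    have h1 : Real.exp (-(2*q)) ≤ 1 - q := exp_le_one_sub hq0 hq12
    have h2 : (Real.exp (-(2*q)))^m ≤ (1-q)^m :=
      pow_le_pow_left₀ (Real.exp_nonneg _) h1 m
    have h3 : (Real.exp (-(2*q)))^m = Real.exp ((m:ℝ) * (-(2*q))) := by
      rw [Real.exp_nat_mul]
    have h4 : Real.exp (-(16*c)) ≤ Real.exp ((m:ℝ) * (-(2*q))) := by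
      apply Real.exp_le_exp.2
      nlinarith [hqm]
    calc Real.exp (-(16*c)) ≤ Real.exp ((m:ℝ) * (-(2*q))) := h4
    _ = (Real.exp (-(2*q)))^m := h3.symm
    _ ≤ (1-q)^m := h2
    _ ≤ b m := hbm
  have hSigm : ENNReal.ofReal (Real.exp (-(16*c))) ≤ volume (Sig J m) := by
    rw [← ENNReal.ofReal_toReal (hSfin m)]
    exact ENNReal.ofReal_le_ofReal hexp
  -- exceptional set Y
  set n : ℕ := m + s with hndef
  set Y : Set ℝ := ⋃ j ∈ Finset.range n, ⋃ i : ℤ, {((y + (i:ℝ))/2^j : ℝ)} with hYdef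
  have hY0 : volume Y = 0 := by
    apply Set.Countable.measure_zero
    apply Set.Countable.biUnion ((Finset.range n).finite_toSet.countable)
    intro j _
    exact countable_iUnion (fun i => countable_singleton _)
  have hYmem : ∀ (j : ℕ), j < n → ∀ x : ℝ, Int.fract ((2:ℝ)^j * x) = y → x ∈ Y := by
    intro j hj x hfr
    have h2j : ((2:ℝ)^j) ≠ 0 := by positivity
    have hx : x = (y + (⌊(2:ℝ)^j * x⌋ : ℝ))/2^j := by
      rw [Int.fract] at hfr
      rw [eq_div_iff h2j]
      linarith [hfr]
    simp only [hYdef, mem_iUnion, Finset.mem_range, mem_singleton_iff]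
    exact ⟨j, hj, ⌊(2:ℝ)^j * x⌋, hx⟩
  -- the shift property
  have hshift : ∀ x ∈ Ico (0:ℝ) 1,
      (∀ m', m₀ ≤ m' → ∃ k, k < m' ∧ doubling^[k] x ∈ B m') → x ∉ Y →
      Int.fract ((2:ℝ)^n * x) ∈ eahSet doubling B := by
    intro x hxI hxE hxY
    by_contra hnot
    have hiter : ∀ kk : ℕ, doubling^[kk] x = Int.fract ((2:ℝ)^kk * x) :=
      fun kk => doubling_iterate kk x hxI
    rw [eahSet, mem_setOf_eq] at hnot
    push_neg at hnot
    by_cases hex : ∃ j, j < n ∧ ∀ M : ℕ, ∃ m', M ≤ m' ∧ doubling^[j] x ∈ B m'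
    · obtain ⟨j, hj, hinf⟩ := hex
      have hzB : ∀ m₁ : ℕ, doubling^[j] x ∈ B m₁ := by
        intro m₁
        obtain ⟨m', hm', hmem⟩ := hinf m₁
        exact hBanti hm' hmem
      have hdist : ∀ m₁ : ℕ, dist (doubling^[j] x) y ≤ r m₁ := by
        intro m₁
        have h := hzB m₁
        rw [hB m₁] at h
        exact (Metric.mem_ball.1 h.1).le
      have hle : dist (doubling^[j] x) y ≤ 0 :=
        ge_of_tendsto hrlim (Filter.Eventually.of_forall hdist)
      have heq : doubling^[j] x = y := by
        have := dist_le_zero.1 hle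
        exact this
      exact hxY (hYmem j hj x (by rw [← hiter j]; exact heq))
    · push_neg at hex
      choose f hf using hex
      set Mstar : ℕ := (Finset.range n).sup (fun j => if h : j < n then f j h else 0) with hMs
      obtain ⟨m', hm'1, hm'2⟩ := hnot (max Mstar m₀)
      obtain ⟨k₀, hk₀, hk₀B⟩ := hxE m' (le_trans (le_max_right _ _) hm'1)
      rcases Nat.lt_or_ge k₀ n with hk₀n | hk₀n
      · -- early witness: contradiction with hf
        have hfk : f k₀ hk₀n ≤ Mstar := by
          have hmem : k₀ ∈ Finset.range n := Finset.mem_range.2 hk₀n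
          have h2 := Finset.le_sup (f := fun j => if h : j < n then f j h else 0) hmem
          have h3 : (if h : k₀ < n then f k₀ h else 0) ≤ Mstar := h2
          rwa [dif_pos hk₀n] at h3
        exact hf k₀ hk₀n m' (le_trans hfk (le_trans (le_max_left _ _) hm'1)) hk₀B
      · -- late witness: contradiction with hnot
        have hiterk : doubling^[k₀] x = doubling^[k₀ - n] (Int.fract ((2:ℝ)^n * x)) := by
          rw [← hiter n, ← Function.iterate_add_apply]
          congr 1
          omega
        have := hm'2 (k₀ - n) (by omega)
        rw [← hiterk] at this
        exact this hk₀B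
  -- hit set in fract form
  set HitF : Set ℝ := ⋃ j ∈ Finset.range m,
      (fun x => Int.fract ((2:ℝ)^j * x)) ⁻¹' (B m) with hHitdef
  set preF : Set ℝ := (fun x => Int.fract ((2:ℝ)^n * x)) ⁻¹' (eahSet doubling B) with hpredef
  have hpremeas : MeasurableSet preF := (measurable_fract2 n) hEAmeas
  have hEmsub : {x | ∀ m', m₀ ≤ m' → ∃ k, k < m' ∧ doubling^[k] x ∈ B m'} ∩ Ico (0:ℝ) 1
      ⊆ (HitF ∩ preF ∩ Ico (0:ℝ) 1) ∪ Y := by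
    rintro x ⟨hxE, hxI⟩
    by_cases hxY : x ∈ Y
    · exact Or.inr hxY
    · left
      refine ⟨⟨?_, hshift x hxI hxE hxY⟩, hxI⟩
      obtain ⟨k₀, hk₀, hk₀B⟩ := hxE m hmm₀
      simp only [hHitdef, mem_iUnion, Finset.mem_range, mem_preimage]
      exact ⟨k₀, hk₀, by rw [← doubling_iterate k₀ x hxI]; exact hk₀B⟩
  have hdisjSH : Disjoint (HitF ∩ preF ∩ Ico (0:ℝ) 1) (Sig J m ∩ preF) := by
    rw [Set.disjoint_left]
    rintro x ⟨⟨hxH, _⟩, _⟩ ⟨hxS, _⟩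
    simp only [hHitdef, mem_iUnion, Finset.mem_range, mem_preimage] at hxH
    obtain ⟨j, hj, hjB⟩ := hxH
    have hxS2 := hxS.2
    simp only [Sig, mem_iInter, Finset.mem_range, mem_preimage] at hxS2
    exact (hxS2 j hj).2 (hBJ hjB)
  have hSig_pre : volume (Sig J m ∩ preF)
      = volume (Sig J m) * volume (eahSet doubling B ∩ Ico (0:ℝ) 1) := by
    have hDSm : DS n (Sig J m) := by
      have h := Sig_DS hJDS m
      rwa [← hndef] at h
    exact DS_indep le_rfl hDSm hEAmeas
  have hunion_le : volume (HitF ∩ preF ∩ Ico (0:ℝ) 1) + volume (Sig J m ∩ preF)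
      ≤ volume (eahSet doubling B ∩ Ico (0:ℝ) 1) := by
    rw [← measure_union hdisjSH ((Sig_measurable hJDS.1 m).inter hpremeas)]
    have hsub2 : (HitF ∩ preF ∩ Ico (0:ℝ) 1) ∪ (Sig J m ∩ preF) ⊆ Ico (0:ℝ) 1 ∩ preF := by
      rintro x (⟨⟨_, hp⟩, hI⟩ | ⟨hS, hp⟩)
      · exact ⟨hI, hp⟩
      · exact ⟨hS.1, hp⟩
    calc volume ((HitF ∩ preF ∩ Ico (0:ℝ) 1) ∪ (Sig J m ∩ preF))
        ≤ volume (Ico (0:ℝ) 1 ∩ preF) := measure_mono hsub2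
    _ = volume (eahSet doubling B ∩ Ico (0:ℝ) 1) := vol_fract_pre n _ hEAmeas
  calc volume ({x | ∀ m', m₀ ≤ m' → ∃ k, k < m' ∧ doubling^[k] x ∈ B m'} ∩ Ico (0:ℝ) 1)
        + ENNReal.ofReal (Real.exp (-(16*c))) * volume (eahSet doubling B ∩ Ico (0:ℝ) 1)
      ≤ volume ((HitF ∩ preF ∩ Ico (0:ℝ) 1) ∪ Y)
        + volume (Sig J m) * volume (eahSet doubling B ∩ Ico (0:ℝ) 1) :=
        add_le_add (measure_mono hEmsub) (mul_le_mul_left hSigm _)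
  _ ≤ (volume (HitF ∩ preF ∩ Ico (0:ℝ) 1) + volume Y)
        + volume (Sig J m) * volume (eahSet doubling B ∩ Ico (0:ℝ) 1) :=
        add_le_add (measure_union_le _ _) le_rfl
  _ = volume (HitF ∩ preF ∩ Ico (0:ℝ) 1) + volume (Sig J m ∩ preF) := by
        rw [hY0, add_zero, hSig_pre]
  _ ≤ volume (eahSet doubling B ∩ Ico (0:ℝ) 1) := hunion_le

end Main

end DEAH


open DEAH in
/-- For the doubling map with Lebesgue measure on `[0,1)`, if `B m` is a nested
sequence of intervals with a fixed center whose lengths tend to `0` and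
`μ (B m) ≤ c / m` for all `m ≥ 1`, then the set of eventually always hitting
points has measure zero. -/
theorem doubling_eah_measure_zero
    (y : ℝ) (r : ℕ → ℝ) (hr0 : ∀ m, 0 ≤ r m) (hmono : Antitone r)
    (hrlim : Tendsto r atTop (nhds 0))
    (B : ℕ → Set ℝ) (hB : ∀ m, B m = Metric.ball y (r m) ∩ Set.Ico (0 : ℝ) 1)
    (c : ℝ)
    (hc : ∀ m : ℕ, 1 ≤ m →
      (volume.restrict (Set.Ico (0 : ℝ) 1)) (B m) ≤ ENNReal.ofReal (c / m)) :
    (volume.restrict (Set.Ico (0 : ℝ) 1)) (eahSet doubling B) = 0 := by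
  classical
  have hBmeas : ∀ m, MeasurableSet (B m) := fun m => by
    rw [hB m]; exact measurableSet_ball.inter measurableSet_Ico
  have hmeasT : Measurable doubling := measurable_fract.comp (measurable_const_mul 2)
  have hBanti : ∀ {a b : ℕ}, a ≤ b → B b ⊆ B a := by
    intro a b hab
    rw [hB a, hB b]
    exact inter_subset_inter_left _ (Metric.ball_subset_ball (hmono hab))
  have hBsub : ∀ m, B m ⊆ Ico (0:ℝ) 1 := fun m => by rw [hB m]; exact inter_subset_right
  have hEAeq : eahSet doubling B =
      ⋃ m₀ : ℕ, ⋂ m : ℕ, ⋂ _ : m₀ ≤ m, ⋃ k : ℕ, ⋃ _ : k < m, (doubling^[k]) ⁻¹' (B m) := by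
    ext x
    simp only [eahSet, mem_setOf_eq, mem_iUnion, mem_iInter, mem_preimage, exists_prop]
  have hEAmeas : MeasurableSet (eahSet doubling B) := by
    rw [hEAeq]
    apply MeasurableSet.iUnion; intro m₀
    apply MeasurableSet.iInter; intro m
    apply MeasurableSet.iInter; intro _
    apply MeasurableSet.iUnion; intro k
    apply MeasurableSet.iUnion; intro _
    exact (hmeasT.iterate k) (hBmeas m)
  rw [Measure.restrict_apply hEAmeas]
  by_cases hne : ∀ m : ℕ, 1 ≤ m → (B m).Nonempty
  · -- main case
    -- c > 0
    have hc0 : 0 < c := by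
      obtain ⟨x, hx⟩ := hne 1 le_rfl
      have hxI : x ∈ Ioo (y - r 1) (y + r 1) ∩ Ico (0:ℝ) 1 := by
        rw [hB 1, Real.ball_eq_Ioo] at hx; exact hx
      obtain ⟨⟨h1, h2⟩, h3, h4⟩ := hxI
      set L1 : ℝ := max 0 (y - r 1) with hL1
      set U1 : ℝ := min 1 (y + r 1) with hU1
      have hLU : L1 < U1 := by
        calc L1 ≤ x := max_le h3 h1.le
        _ < U1 := lt_min h4 h2
      have hIoosub : Ioo L1 U1 ⊆ B 1 := by
        rintro z ⟨hz1, hz2⟩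
        rw [hB 1, Real.ball_eq_Ioo]
        rw [max_lt_iff] at hz1
        rw [lt_min_iff] at hz2
        exact ⟨⟨hz1.2, hz2.2⟩, hz1.1.le, hz2.1⟩
      have h5 := hc 1 le_rfl
      rw [Measure.restrict_apply (hBmeas 1),
        inter_eq_self_of_subset_left (hBsub 1)] at h5
      have hpos : (0:ℝ≥0∞) < volume (B 1) := by
        calc (0:ℝ≥0∞) < ENNReal.ofReal (U1 - L1) := ENNReal.ofReal_pos.2 (by linarith)
        _ = volume (Ioo L1 U1) := (Real.volume_Ioo).symm
        _ ≤ volume (B 1) := measure_mono hIoosub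
      have := ENNReal.ofReal_pos.1 (lt_of_lt_of_le hpos h5)
      rw [Nat.cast_one, div_one] at this
      exact this
    set δ : ℝ≥0∞ := ENNReal.ofReal (Real.exp (-(16*c))) with hδ
    have hδ0 : δ ≠ 0 := by
      rw [hδ, ne_eq, ENNReal.ofReal_eq_zero, not_le]
      exact Real.exp_pos _
    set α := volume (eahSet doubling B ∩ Ico (0:ℝ) 1) with hα
    have hαfin : α ≠ ⊤ := by
      apply ne_top_of_le_ne_top ENNReal.one_ne_top
      calc α ≤ volume (Ico (0:ℝ) 1) := measure_mono inter_subset_right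
      _ = 1 := by rw [Real.volume_Ico]; norm_num
    have hKEY : ∀ m₀ : ℕ,
        volume ({x | ∀ m', m₀ ≤ m' → ∃ k, k < m' ∧ doubling^[k] x ∈ B m'} ∩ Ico (0:ℝ) 1)
          + δ * α ≤ α :=
      fun m₀ => key_step hr0 hmono hrlim hB hc hne hc0 hBmeas hEAmeas m₀
    have hunion : eahSet doubling B ∩ Ico (0:ℝ) 1
        = ⋃ m₀ : ℕ,
          ({x | ∀ m', m₀ ≤ m' → ∃ k, k < m' ∧ doubling^[k] x ∈ B m'} ∩ Ico (0:ℝ) 1) := by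
      ext x
      simp only [eahSet, mem_inter_iff, mem_setOf_eq, mem_iUnion]
      tauto
    have hdir : Directed (· ⊆ ·) (fun m₀ : ℕ =>
        ({x | ∀ m', m₀ ≤ m' → ∃ k, k < m' ∧ doubling^[k] x ∈ B m'} ∩ Ico (0:ℝ) 1)) := by
      apply Monotone.directed_le
      intro a b hab x hx
      exact ⟨fun m' hm' => hx.1 m' (le_trans hab hm'), hx.2⟩
    have hsup : α = ⨆ m₀ : ℕ,
        volume ({x | ∀ m', m₀ ≤ m' → ∃ k, k < m' ∧ doubling^[k] x ∈ B m'} ∩ Ico (0:ℝ) 1) := by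
      rw [hα, hunion, Directed.measure_iUnion hdir]
    have hle : α + δ * α ≤ α + 0 := by
      rw [add_zero]
      calc α + δ * α = (⨆ m₀ : ℕ,
          volume ({x | ∀ m', m₀ ≤ m' → ∃ k, k < m' ∧ doubling^[k] x ∈ B m'}
            ∩ Ico (0:ℝ) 1)) + δ * α := by rw [← hsup]
      _ = ⨆ m₀ : ℕ,
          (volume ({x | ∀ m', m₀ ≤ m' → ∃ k, k < m' ∧ doubling^[k] x ∈ B m'}
            ∩ Ico (0:ℝ) 1) + δ * α) := ENNReal.iSup_add _
      _ ≤ α := iSup_le hKEY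
    have h0 : δ * α ≤ 0 := (ENNReal.add_le_add_iff_left hαfin).1 hle
    have h00 : δ * α = 0 := le_antisymm h0 (by positivity)
    rcases mul_eq_zero.1 h00 with h | h
    · exact absurd h hδ0
    · exact h
  · -- degenerate case: some target is empty
    push_neg at hne
    obtain ⟨m₁, hm₁, hBe⟩ := hne
    have hempty : eahSet doubling B = ∅ := by
      ext x
      simp only [eahSet, mem_setOf_eq, mem_empty_iff_false, iff_false, not_exists]
      intro m₀' hm
      obtain ⟨k, hk, hkB⟩ := hm (max m₀' m₁) (le_max_left _ _)
      have : doubling^[k] x ∈ B m₁ := hBanti (le_max_right m₀' m₁) hkB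
      rw [hBe] at this
      exact this
    rw [hempty, empty_inter, measure_empty]
end

section
/- Let T be the doubling map on [0,1) and let s ≥ 1. For the targets B_m = [0, 2^{-sm}), the set E_ah of eventually always hitting points is countable; in particular its packing dimension is 0. Moreover, for s = 1, E_ah consists exactly of the points x ∈ [0,1) such that T^n(x) = 0 for some n ≥ 0. -/
open MeasureTheory Filter Set
open scoped ENNReal

/-- The packing pre-measure at scale `δ`: supremum over `δ`-packings of `F`
(countable collections of disjoint closed balls centred in `F` of radii at most `δ`,
where a slot with radius `0` is an unused slot) of the sum of the `s`-th powers
of the diameters. -/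
noncomputable def packingPre (s δ : ℝ) (F : Set ℝ) : ℝ≥0∞ :=
  ⨆ (c : ℕ → ℝ) (ρ : ℕ → ℝ) (_ : ∀ i, 0 ≤ ρ i ∧ ρ i ≤ δ)
    (_ : ∀ i, 0 < ρ i → c i ∈ F)
    (_ : ∀ i j, i ≠ j → 0 < ρ i → 0 < ρ j →
      Disjoint (Metric.closedBall (c i) (ρ i)) (Metric.closedBall (c j) (ρ j))),
    ∑' i, ENNReal.ofReal ((2 * ρ i) ^ s)

/-- The packing pre-measure `𝒫₀^s(F) = lim_{δ → 0} 𝒫^s_δ(F)`. -/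
noncomputable def packingPre0 (s : ℝ) (F : Set ℝ) : ℝ≥0∞ :=
  ⨅ (δ : ℝ) (_ : 0 < δ), packingPre s δ F

/-- The `s`-dimensional packing measure, obtained from the pre-measure by taking the
infimum over countable covers. -/
noncomputable def packingMeasure (s : ℝ) (F : Set ℝ) : ℝ≥0∞ :=
  ⨅ (E : ℕ → Set ℝ) (_ : F ⊆ ⋃ i, E i), ∑' i, packingPre0 s (E i)

/-- The packing dimension `dim_P F = sup { s ≥ 0 : 𝒫^s(F) = ∞ }`. -/
noncomputable def dimP (F : Set ℝ) : ℝ :=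
  sSup {s : ℝ | 0 ≤ s ∧ packingMeasure s F = ∞}

lemma doubling_iterate (n : ℕ) (x : ℝ) :
    doubling^[n] (Int.fract x) = Int.fract (2 ^ n * x) := by
  induction n generalizing x with
  | zero => simp
  | succ n ih =>
    rw [Function.iterate_succ_apply]
    have h : doubling (Int.fract x) = Int.fract (2 * x) := by
      unfold doubling
      have e : (2:ℝ) * Int.fract x = 2 * x - ((2 * ⌊x⌋ : ℤ) : ℝ) := by
        rw [Int.fract]; push_cast; ring
      rw [e, Int.fract_sub_intCast]
    rw [h, ih (2 * x)]
    congr 1; ring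

lemma fract_double (y : ℝ) (h : Int.fract y < 1/2) : Int.fract (2*y) = 2 * Int.fract y := by
  have h2 : Int.fract (2*y) = Int.fract (2 * Int.fract y) := by
    conv_lhs => rw [show (2:ℝ)*y = 2 * Int.fract y + ((2*⌊y⌋:ℤ):ℝ) by
      rw [Int.fract]; push_cast; ring]
    rw [Int.fract_add_intCast]
  rw [h2, Int.fract_eq_self.2 ⟨by have := Int.fract_nonneg y; linarith, by linarith⟩]

lemma run_zeros (x : ℝ) (k m : ℕ) (h : Int.fract (2^k * x) < ((2:ℝ)^m)⁻¹) :
    ∀ j, j < m → Int.fract ((2:ℝ)^(k+j) * x) = 2^j * Int.fract ((2:ℝ)^k * x) := by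
  intro j
  induction j with
  | zero => intro _; simp
  | succ j ih =>
    intro hj
    have hj' : j < m := Nat.lt_of_succ_lt hj
    have e := ih hj'
    have hb : (2:ℝ)^(j+1) ≤ 2^m := pow_le_pow_right₀ (by norm_num) (le_of_lt hj)
    have hmpos : (0:ℝ) < 2^m := by positivity
    have hlt : Int.fract ((2:ℝ)^(k+j) * x) < 1/2 := by
      rw [e]
      have h1 : (2:ℝ)^j * Int.fract ((2:ℝ)^k * x) < 2^j * ((2:ℝ)^m)⁻¹ := by
        apply mul_lt_mul_of_pos_left h (by positivity)
      have h2 : (2:ℝ)^j * ((2:ℝ)^m)⁻¹ ≤ 1/2 := by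
        rw [mul_inv_le_iff₀ hmpos]
        have : (2:ℝ)^(j+1) = 2^j * 2 := by ring
        nlinarith [hb]
      linarith
    have hd := fract_double ((2:ℝ)^(k+j) * x) hlt
    rw [show (2:ℝ) * ((2:ℝ)^(k+j) * x) = (2:ℝ)^(k+(j+1)) * x by ring] at hd
    rw [hd, e]; ring

lemma exists_half (x : ℝ) (n : ℕ) (hx : Int.fract ((2:ℝ)^n * x) ≠ 0) :
    ∃ p, n ≤ p ∧ 1/2 ≤ Int.fract ((2:ℝ)^p * x) := by
  by_contra hcon
  push_neg at hcon
  have key : ∀ j, Int.fract ((2:ℝ)^(n+j) * x) = 2^j * Int.fract ((2:ℝ)^n * x) := by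
    intro j
    induction j with
    | zero => simp
    | succ j ih =>
      have hlt : Int.fract ((2:ℝ)^(n+j) * x) < 1/2 := hcon _ (Nat.le_add_right n j)
      have hd := fract_double ((2:ℝ)^(n+j) * x) hlt
      rw [show (2:ℝ) * ((2:ℝ)^(n+j) * x) = (2:ℝ)^(n+(j+1)) * x by ring] at hd
      rw [hd, ih]; ring
  have hpos : 0 < Int.fract ((2:ℝ)^n * x) := lt_of_le_of_ne (Int.fract_nonneg _) (Ne.symm hx)
  obtain ⟨j, hj⟩ := pow_unbounded_of_one_lt ((1/2) / Int.fract ((2:ℝ)^n * x)) (by norm_num : (1:ℝ) < 2)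
  have h1 := hcon (n + j) (Nat.le_add_right n j)
  rw [key j] at h1
  rw [div_lt_iff₀ hpos] at hj
  linarith

lemma eah_eq (s : ℝ) (hs : 1 ≤ s) (B : ℕ → Set ℝ)
    (hB : ∀ m : ℕ, B m = Set.Ico (0 : ℝ) ((2 : ℝ) ^ (-(s * (m : ℝ))))) :
    eahSet doubling B ∩ Set.Ico (0 : ℝ) 1
      = {x : ℝ | x ∈ Set.Ico (0 : ℝ) 1 ∧ ∃ n : ℕ, doubling^[n] x = 0} := by
  ext x
  constructor
  · rintro ⟨⟨m₀, hm⟩, hx⟩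
    refine ⟨hx, ?_⟩
    have hfx : Int.fract x = x := Int.fract_eq_self.2 ⟨hx.1, hx.2⟩
    by_contra hcon
    push_neg at hcon
    have hit : ∀ k : ℕ, doubling^[k] x = Int.fract ((2:ℝ)^k * x) := fun k => by
      rw [← doubling_iterate k x, hfx]
    have hne : ∀ n, Int.fract ((2:ℝ)^n * x) ≠ 0 := by
      intro n
      rw [← hit n]
      exact hcon n
    obtain ⟨p, hpm, hhalf⟩ := exists_half x m₀ (hne m₀)
    obtain ⟨k, hk, hkB⟩ := hm (p+1) (le_trans hpm (Nat.le_succ p))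
    rw [hB] at hkB
    have hek : doubling^[k] x = Int.fract ((2:ℝ)^k * x) := hit k
    have h1 : Int.fract ((2:ℝ)^k * x) < ((2:ℝ)^(p+1))⁻¹ := by
      have hlt := hkB.2
      rw [hek] at hlt
      have hle2 : (2:ℝ) ^ (-(s * ((p+1 : ℕ) : ℝ))) ≤ ((2:ℝ)^(p+1))⁻¹ := by
        rw [show ((2:ℝ)^(p+1))⁻¹ = (2:ℝ) ^ (-(((p+1:ℕ)) : ℝ)) by
          rw [← Real.rpow_natCast 2 (p+1), ← Real.rpow_neg (by norm_num)]]
        apply Real.rpow_le_rpow_of_exponent_le (by norm_num)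
        have hp1 : (0:ℝ) ≤ ((p+1:ℕ):ℝ) := by positivity
        nlinarith
      linarith
    have hkle : k ≤ p := Nat.lt_succ_iff.1 hk
    have hrun := run_zeros x k (p+1) h1 (p-k) (lt_of_le_of_lt (Nat.sub_le p k) (Nat.lt_succ_self p))
    rw [Nat.add_sub_cancel' hkle] at hrun
    have hb : (2:ℝ)^(p-k) ≤ 2^p := pow_le_pow_right₀ (by norm_num) (Nat.sub_le p k)
    have hfub : Int.fract ((2:ℝ)^p * x) < 2^(p-k) * ((2:ℝ)^(p+1))⁻¹ := by
      rw [hrun]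
      exact mul_lt_mul_of_pos_left h1 (by positivity)
    have hppos : (0:ℝ) < 2^(p+1) := by positivity
    have hhalf2 : (2:ℝ)^(p-k) * ((2:ℝ)^(p+1))⁻¹ ≤ 1/2 := by
      rw [mul_inv_le_iff₀ hppos]
      have : (2:ℝ)^(p+1) = 2^p * 2 := by ring
      nlinarith
    linarith
  · rintro ⟨hx, n, hn⟩
    refine ⟨⟨n+1, fun m hm => ⟨n, lt_of_lt_of_le (Nat.lt_succ_self n) hm, ?_⟩⟩, hx⟩
    rw [hB, hn]
    exact ⟨le_refl 0, Real.rpow_pos_of_pos two_pos _⟩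

lemma D_countable :
    {x : ℝ | x ∈ Set.Ico (0 : ℝ) 1 ∧ ∃ n : ℕ, doubling^[n] x = 0}.Countable := by
  apply Set.Countable.mono _
    (Set.countable_iUnion fun n : ℕ => Set.countable_range (fun z : ℤ => (z:ℝ)/2^n))
  rintro x ⟨hx, n, hn⟩
  have hfx : Int.fract x = x := Int.fract_eq_self.2 ⟨hx.1, hx.2⟩
  rw [show doubling^[n] x = Int.fract ((2:ℝ)^n * x) from by rw [← doubling_iterate n x, hfx],
    Int.fract] at hn
  refine Set.mem_iUnion.2 ⟨n, ⟨⌊(2:ℝ)^n * x⌋, ?_⟩⟩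
  have h2 : ((2:ℝ)^n) ≠ 0 := by positivity
  field_simp
  linarith

lemma packingPre0_zero_top (F : Set ℝ) : packingPre0 0 F = ⊤ := by
  refine le_antisymm le_top (le_iInf₂ fun δ hδ => ?_)
  have hsum : (⊤ : ℝ≥0∞) = ∑' (_ : ℕ), ENNReal.ofReal ((2 * (0:ℝ)) ^ (0:ℝ)) := by
    rw [show ((2 * (0:ℝ)) ^ (0:ℝ)) = 1 by simp]
    simp [ENNReal.tsum_const_eq_top_of_ne_zero one_ne_zero]
  rw [packingPre, hsum]
  refine le_iSup_of_le (fun _ => 0) (le_iSup_of_le (fun _ => 0) ?_)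
  refine le_iSup_of_le (fun i => ⟨le_refl 0, le_of_lt hδ⟩) ?_
  refine le_iSup_of_le (fun i h => absurd h (lt_irrefl 0)) ?_
  exact le_iSup_of_le (fun i j _ h => absurd h (lt_irrefl 0)) le_rfl

lemma packingMeasure_zero_top (F : Set ℝ) : packingMeasure 0 F = ∞ := by
  refine le_antisymm le_top (le_iInf₂ fun E hE => ?_)
  calc (⊤ : ℝ≥0∞) = packingPre0 0 (E 0) := (packingPre0_zero_top _).symm
    _ ≤ ∑' i, packingPre0 0 (E i) := ENNReal.le_tsum 0

lemma packingPre_singleton_le (s δ : ℝ) (hs : 0 < s) (x : ℝ) :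
    packingPre s δ {x} ≤ ENNReal.ofReal ((2*δ)^s) := by
  rw [packingPre]
  refine iSup_le fun c => iSup_le fun ρ => iSup_le fun h1 => iSup_le fun h2 => iSup_le fun h3 => ?_
  by_cases hall : ∀ i, ρ i ≤ 0
  · have hz : ∀ i : ℕ, ENNReal.ofReal ((2 * ρ i) ^ s) = 0 := by
      intro i
      have : ρ i = 0 := le_antisymm (hall i) (h1 i).1
      simp [this, Real.zero_rpow hs.ne']
    rw [tsum_congr hz, tsum_zero]
    exact zero_le
  · push_neg at hall
    obtain ⟨i₀, hi₀'⟩ := hall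
    have hi₀ : 0 < ρ i₀ := lt_of_le_of_ne (h1 i₀).1 (by intro h; exact absurd h.symm (ne_of_gt hi₀'))
    have hz : ∀ i ≠ i₀, ENNReal.ofReal ((2 * ρ i) ^ s) = 0 := by
      intro i hi
      have hρi : ρ i = 0 := by
        by_contra hne
        have hpos : 0 < ρ i := lt_of_le_of_ne (h1 i).1 (Ne.symm hne)
        have hd := h3 i i₀ hi hpos hi₀
        have hm1 : x ∈ Metric.closedBall (c i) (ρ i) := by
          rw [h2 i hpos]; exact Metric.mem_closedBall_self hpos.le
        have hm2 : x ∈ Metric.closedBall (c i₀) (ρ i₀) := by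
          rw [h2 i₀ hi₀]; exact Metric.mem_closedBall_self hi₀.le
        exact Set.disjoint_left.1 hd hm1 hm2
      simp [hρi, Real.zero_rpow hs.ne']
    rw [tsum_eq_single i₀ hz]
    apply ENNReal.ofReal_le_ofReal
    exact Real.rpow_le_rpow (by linarith) (by linarith [(h1 i₀).2]) hs.le

lemma packingPre0_singleton (s : ℝ) (hs : 0 < s) (x : ℝ) : packingPre0 s {x} = 0 := by
  have hle : ∀ ε : ℝ, 0 < ε → packingPre0 s {x} ≤ ENNReal.ofReal ε := by
    intro ε hε
    have hδ : (0:ℝ) < ε ^ s⁻¹ / 2 := by positivity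
    have h1 : packingPre0 s {x} ≤ packingPre s (ε ^ s⁻¹ / 2) {x} := iInf₂_le _ hδ
    have h2 := packingPre_singleton_le s (ε ^ s⁻¹ / 2) hs x
    rw [show 2 * (ε ^ s⁻¹ / 2) = ε ^ s⁻¹ by ring, Real.rpow_inv_rpow hε.le hs.ne'] at h2
    exact le_trans h1 h2
  by_contra hne
  have hXt : packingPre0 s {x} ≠ ⊤ := by
    intro h
    have := hle 1 one_pos
    rw [h] at this
    exact absurd this (by simp)
  have hXr : 0 < (packingPre0 s {x}).toReal := ENNReal.toReal_pos hne hXt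
  have h1 := hle ((packingPre0 s {x}).toReal / 2) (by positivity)
  have h2 : ENNReal.ofReal ((packingPre0 s {x}).toReal / 2) < packingPre0 s {x} := by
    conv_rhs => rw [← ENNReal.ofReal_toReal hXt]
    rw [ENNReal.ofReal_lt_ofReal_iff hXr]
    linarith
  exact absurd (lt_of_le_of_lt h1 h2) (lt_irrefl _)

lemma packingMeasure_of_countable (s : ℝ) (hs : 0 < s) (F : Set ℝ) (hF : F.Countable) :
    packingMeasure s F = 0 := by
  obtain ⟨f, hf⟩ := (hF.insert 0).exists_eq_range (Set.insert_nonempty 0 F)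
  have hcov : F ⊆ ⋃ i, {f i} := by
    intro y hy
    have : y ∈ Set.range f := hf ▸ Set.mem_insert_of_mem 0 hy
    obtain ⟨i, hi⟩ := this
    exact Set.mem_iUnion.2 ⟨i, hi.symm⟩
  refine le_antisymm ?_ zero_le
  have hle : packingMeasure s F ≤ ∑' i, packingPre0 s {f i} := by
    rw [packingMeasure]
    exact iInf₂_le (fun i => ({f i} : Set ℝ)) hcov
  calc packingMeasure s F ≤ ∑' i, packingPre0 s {f i} := hle
    _ = 0 := by simp [packingPre0_singleton s hs]

lemma dimP_of_countable (F : Set ℝ) (hF : F.Countable) : dimP F = 0 := by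
  have hset : {s : ℝ | 0 ≤ s ∧ packingMeasure s F = ∞} = {0} := by
    ext t
    simp only [Set.mem_setOf_eq, Set.mem_singleton_iff]
    constructor
    · rintro ⟨ht, htop⟩
      by_contra hne
      have hpos : 0 < t := lt_of_le_of_ne ht (Ne.symm hne)
      rw [packingMeasure_of_countable t hpos F hF] at htop
      exact ENNReal.zero_ne_top htop
    · rintro rfl
      exact ⟨le_refl 0, packingMeasure_zero_top F⟩
  rw [dimP, hset, csSup_singleton]


/-- For the doubling map with targets `B m = [0, 2^{-sm})`, `s ≥ 1`, the set of
eventually always hitting points is countable, its packing dimension is `0`, and for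
`s = 1` it consists exactly of the points of `[0,1)` whose orbit eventually hits `0`. -/
theorem doubling_eah_countable (s : ℝ) (hs : 1 ≤ s)
    (B : ℕ → Set ℝ)
    (hB : ∀ m : ℕ, B m = Set.Ico (0 : ℝ) ((2 : ℝ) ^ (-(s * (m : ℝ))))) :
    (eahSet doubling B ∩ Set.Ico (0 : ℝ) 1).Countable ∧
    dimP (eahSet doubling B ∩ Set.Ico (0 : ℝ) 1) = 0 ∧
    (s = 1 → eahSet doubling B ∩ Set.Ico (0 : ℝ) 1
      = {x : ℝ | x ∈ Set.Ico (0 : ℝ) 1 ∧ ∃ n : ℕ, doubling^[n] x = 0}) := by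
  have heq := eah_eq s hs B hB
  have hcnt : (eahSet doubling B ∩ Set.Ico (0 : ℝ) 1).Countable := by
    rw [heq]; exact D_countable
  exact ⟨hcnt, dimP_of_countable _ hcnt, fun _ => heq⟩
end

section
/- Let (X, μ, T) be a measure-preserving dynamical system (μ finite or infinite) and let (B_m)_{m≥1} be a nested family of measurable targets with μ(B_m) → 0. Then the set E_ah of eventually always hitting points satisfies μ(E_ah △ T^{-1}(E_ah)) = 0, i.e. E_ah is almost invariant under T. -/
open MeasureTheory Filter Set
open scoped symmDiff

/-- For a measure-preserving system (`μ` finite or infinite) and a nested family of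
measurable targets with `μ (B m) → 0`, the set of eventually always hitting points
is almost invariant: `μ (E_ah ∆ T⁻¹ E_ah) = 0`. -/
theorem eah_almost_invariant {X : Type*} [MeasurableSpace X]
    (μ : Measure X) (T : X → X) (hT : MeasurePreserving T μ μ)
    (B : ℕ → Set X) (hmeas : ∀ m, MeasurableSet (B m))
    (hnested : ∀ m, B (m + 1) ⊆ B m)
    (hlim : Tendsto (fun m => μ (B m)) atTop (nhds 0)) :
    μ ((eahSet T B) ∆ (T ⁻¹' (eahSet T B))) = 0 := by
  have hanti : Antitone B := antitone_nat_of_succ_le hnested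
  set F : ℕ → Set X := fun q => {x | ∀ m : ℕ, q ≤ m → ∃ k : ℕ, k < m ∧ T^[k] x ∈ B m} with hF
  have hEF : eahSet T B = ⋃ q, F q := by
    ext x; rw [Set.mem_iUnion]; exact Iff.rfl
  have hFmono : ∀ {q r : ℕ}, q ≤ r → F q ⊆ F r := by
    intro q r hqr x hx m hm
    exact hx m (hqr.trans hm)
  have hFmeas : ∀ q, MeasurableSet (F q) := by
    intro q
    have : F q = ⋂ m, ⋂ (_ : q ≤ m), ⋃ k, ⋃ (_ : k < m), T^[k] ⁻¹' B m := by
      ext x; simp [hF]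
    rw [this]
    exact MeasurableSet.iInter fun m => MeasurableSet.iInter fun _ =>
      MeasurableSet.iUnion fun k => MeasurableSet.iUnion fun _ =>
        (hmeas m).preimage (hT.measurable.iterate k)
  have hFfin : ∀ q, μ (F q) ≠ ⊤ := by
    intro q
    obtain ⟨m, hm1, hmq⟩ : ∃ m, μ (B m) < 1 ∧ q ≤ m :=
      ((hlim.eventually (gt_mem_nhds zero_lt_one)).and (eventually_ge_atTop q)).exists
    have hsub : F q ⊆ ⋃ k ∈ Finset.range m, T^[k] ⁻¹' B m := by
      intro x hx
      obtain ⟨k, hk, hkx⟩ := hx m hmq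
      exact Set.mem_biUnion (Finset.mem_range.mpr hk) hkx
    have hle : μ (F q) ≤ ∑ k ∈ Finset.range m, μ (T^[k] ⁻¹' B m) :=
      (measure_mono hsub).trans (measure_biUnion_finset_le _ _)
    have heq : ∀ k, μ (T^[k] ⁻¹' B m) = μ (B m) := fun k =>
      (hT.iterate k).measure_preimage (hmeas m).nullMeasurableSet
    have hsum : ∑ k ∈ Finset.range m, μ (T^[k] ⁻¹' B m) = m * μ (B m) := by
      simp [heq]
    refine ne_top_of_le_ne_top ?_ (hle.trans_eq hsum)
    exact (ENNReal.mul_lt_top (ENNReal.natCast_lt_top m) (hm1.trans ENNReal.one_lt_top)).ne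
  have key : ∀ q, F q \ T ⁻¹' (F q) ⊆ B (q + 1) := by
    intro q x hx
    by_contra hxB
    refine hx.2 ?_
    show T x ∈ F q
    intro m hm
    obtain ⟨k, hk, hkx⟩ := hx.1 (m + 1) (Nat.le_succ_of_le hm)
    cases k with
    | zero => exact absurd (hanti (Nat.succ_le_succ hm) hkx) hxB
    | succ j =>
      exact ⟨j, Nat.lt_of_succ_lt_succ hk,
        hnested m (by rwa [Function.iterate_succ_apply] at hkx)⟩
  have hdiff : ∀ q, μ (T ⁻¹' (F q) \ F q) ≤ μ (B (q + 1)) := by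
    intro q
    have h1 : μ (T ⁻¹' F q \ F q) + μ (T ⁻¹' F q ∩ F q) = μ (T ⁻¹' F q) :=
      measure_diff_add_inter _ (hFmeas q)
    have h2 : μ (F q \ T ⁻¹' F q) + μ (F q ∩ T ⁻¹' F q) = μ (F q) :=
      measure_diff_add_inter _ ((hFmeas q).preimage hT.measurable)
    have h3 : μ (T ⁻¹' F q) = μ (F q) := hT.measure_preimage (hFmeas q).nullMeasurableSet
    have hfin : μ (T ⁻¹' F q ∩ F q) ≠ ⊤ :=
      ne_top_of_le_ne_top (hFfin q) (measure_mono Set.inter_subset_right)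
    have h2' : μ (F q \ T ⁻¹' F q) + μ (T ⁻¹' F q ∩ F q) = μ (F q) := by
      rw [Set.inter_comm]; exact h2
    have heq : μ (T ⁻¹' F q \ F q) = μ (F q \ T ⁻¹' F q) :=
      WithTop.add_right_cancel hfin (h1.trans (h3.trans h2'.symm))
    exact heq.trans_le (measure_mono (key q))
  have main1 : μ (eahSet T B \ T ⁻¹' eahSet T B) = 0 := by
    have hsub : eahSet T B \ T ⁻¹' eahSet T B ⊆ ⋂ r, B r := by
      rintro x ⟨hxE, hxP⟩
      rw [hEF] at hxE
      obtain ⟨q, hq⟩ := Set.mem_iUnion.mp hxE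
      refine Set.mem_iInter.mpr fun r => ?_
      have hx' : x ∈ F (max q r) := hFmono (le_max_left q r) hq
      have hxP' : x ∉ T ⁻¹' F (max q r) := fun h =>
        hxP (by
          rw [hEF]
          exact Set.mem_preimage.mpr (Set.mem_iUnion.mpr ⟨max q r, h⟩))
      exact hanti ((le_max_right q r).trans (Nat.le_succ _)) (key _ ⟨hx', hxP'⟩)
    have hbound : ∀ r, μ (eahSet T B \ T ⁻¹' eahSet T B) ≤ μ (B r) :=
      fun r => (measure_mono hsub).trans (measure_mono (Set.iInter_subset _ r))
    exact le_antisymm (ge_of_tendsto' hlim hbound) zero_le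
  have main2 : μ (T ⁻¹' eahSet T B \ eahSet T B) = 0 := by
    have hcover : T ⁻¹' eahSet T B \ eahSet T B
        ⊆ ⋃ q, ⋂ r, (T ⁻¹' F (r + q) \ F (r + q)) := by
      rintro x ⟨hxP, hxE⟩
      rw [hEF] at hxP
      obtain ⟨q, hq⟩ := Set.mem_iUnion.mp (Set.mem_preimage.mp hxP)
      refine Set.mem_iUnion.mpr ⟨q, Set.mem_iInter.mpr fun r => ?_⟩
      refine ⟨Set.mem_preimage.mpr (hFmono (Nat.le_add_left q r) hq), fun hxF => hxE ?_⟩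
      rw [hEF]; exact Set.mem_iUnion.mpr ⟨r + q, hxF⟩
    refine measure_mono_null hcover (measure_iUnion_null fun q => ?_)
    have hb : ∀ r, μ (⋂ r', (T ⁻¹' F (r' + q) \ F (r' + q))) ≤ μ (B (r + (q + 1))) := by
      intro r
      exact (measure_mono (Set.iInter_subset _ r)).trans (hdiff (r + q))
    have htend : Tendsto (fun r : ℕ => μ (B (r + (q + 1)))) atTop (nhds 0) :=
      hlim.comp (tendsto_add_atTop_nat (q + 1))
    exact le_antisymm (ge_of_tendsto' htend hb) zero_le
  rw [Set.symmDiff_def]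
  exact measure_union_null main1 main2
end

section
/- Let (X, μ, T) be an ergodic measure-preserving dynamical system with μ a probability measure, and let (B_m)_{m≥1} be a nested family of measurable targets with μ(B_m) → 0. Then μ(E_ah) = 0 or μ(E_ah) = 1. -/
open MeasureTheory Filter Set

/-- For an ergodic probability-measure-preserving system and a nested family of
measurable targets with `μ (B m) → 0`, the set of eventually always hitting points
obeys a zero-one law. -/
theorem eah_zero_one_law {X : Type*} [MeasurableSpace X]
    (μ : Measure X) [IsProbabilityMeasure μ] (T : X → X) (hT : Ergodic T μ)
    (B : ℕ → Set X) (hmeas : ∀ m, MeasurableSet (B m))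
    (hnested : ∀ m, B (m + 1) ⊆ B m)
    (hlim : Tendsto (fun m => μ (B m)) atTop (nhds 0)) :
    μ (eahSet T B) = 0 ∨ μ (eahSet T B) = 1 := by
  have hTm : Measurable T := hT.toMeasurePreserving.measurable
  set E := eahSet T B with hEdef
  have hanti : Antitone B := antitone_nat_of_succ_le hnested
  -- measurability of E
  have hE : MeasurableSet E := by
    have hrep : E = ⋃ m₀ : ℕ, ⋂ m : ℕ, ⋂ _ : m₀ ≤ m,
        ⋃ k : ℕ, ⋃ _ : k < m, (T^[k]) ⁻¹' B m := by
      ext x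
      simp [hEdef, eahSet, mem_iUnion, mem_iInter]
    rw [hrep]
    exact MeasurableSet.iUnion fun m₀ => MeasurableSet.iInter fun m =>
      MeasurableSet.iInter fun _ => MeasurableSet.iUnion fun k =>
      MeasurableSet.iUnion fun _ => (hTm.iterate k) (hmeas m)
  -- the tail intersection is null
  set N := ⋂ m, B m with hNdef
  have hN : μ N = 0 := by
    have h1 : μ N ≤ 0 :=
      ge_of_tendsto hlim (Eventually.of_forall fun m => measure_mono (iInter_subset B m))
    exact le_antisymm h1 zero_le
  -- E \ N ⊆ T⁻¹' E
  have hsub : E \ N ⊆ T ⁻¹' E := by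
    rintro x ⟨⟨m₀, hm₀⟩, hxN⟩
    obtain ⟨M, hM⟩ : ∃ M, x ∉ B M := by
      by_contra h
      push_neg at h
      exact hxN (mem_iInter.2 h)
    refine ⟨max m₀ M, fun m hm => ?_⟩
    obtain ⟨k, hk, hkx⟩ := hm₀ (m + 1) (le_trans (le_trans (le_max_left _ _) hm) (Nat.le_succ m))
    rcases Nat.eq_zero_or_pos k with rfl | hkpos
    · exact absurd (hanti (le_trans (le_trans (le_max_right _ _) hm) (Nat.le_succ m)) hkx) hM
    · obtain ⟨j, rfl⟩ := Nat.exists_eq_add_of_lt hkpos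
      refine ⟨j, by omega, ?_⟩
      have : T^[0 + j + 1] x = T^[j] (T x) := by
        simp [Function.iterate_succ_apply]
      rw [← this]
      exact hanti (Nat.le_succ m) hkx
  -- hence E =ᵐ T⁻¹' E
  have hmeq : μ (T ⁻¹' E) = μ E := hT.toMeasurePreserving.measure_preimage hE.nullMeasurableSet
  have hdiff1 : μ (E \ T ⁻¹' E) = 0 :=
    measure_mono_null (fun x hx => by
      by_contra hxN
      exact hx.2 (hsub ⟨hx.1, hxN⟩)) hN
  have hdiff2 : μ (T ⁻¹' E \ E) = 0 := by
    have hunion : μ (T ⁻¹' E ∪ E) ≤ μ E := by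
      have : T ⁻¹' E ∪ E ⊆ T ⁻¹' E ∪ (E \ T ⁻¹' E) := by
        intro x hx
        rcases hx with hx | hx
        · exact Or.inl hx
        · by_cases h : x ∈ T ⁻¹' E
          · exact Or.inl h
          · exact Or.inr ⟨hx, h⟩
      calc μ (T ⁻¹' E ∪ E) ≤ μ (T ⁻¹' E) + μ (E \ T ⁻¹' E) :=
            le_trans (measure_mono this) (measure_union_le _ _)
        _ = μ E := by rw [hdiff1, add_zero, hmeq]
    have := measure_diff' (T ⁻¹' E) hE.nullMeasurableSet (measure_ne_top μ E)
    rw [this]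
    exact tsub_eq_zero_of_le hunion
  have haeeq : (T ⁻¹' E : Set X) =ᵐ[μ] E := by
    rw [MeasureTheory.ae_eq_set]
    exact ⟨hdiff2, hdiff1⟩
  rcases hT.quasiErgodic.ae_empty_or_univ₀ hE.nullMeasurableSet haeeq with h | h
  · left
    exact ae_eq_empty.mp h
  · right
    have := measure_congr h
    simpa using this
end

section
/- Let (X, μ, T) be a measure-preserving dynamical system with μ a probability measure, and let (B_m)_{m≥1} be measurable targets with μ(B_m) → 0. If μ(E_ah) = 1, then there exists a sequence c_m → 1 such that μ(B_m) ≥ c_m/m for all m; equivalently, liminf_{m→∞} m·μ(B_m) ≥ 1. -/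
open MeasureTheory Filter Set
open scoped ENNReal

/-- For a probability-measure-preserving system with targets satisfying
`μ (B m) → 0`, if the set of eventually always hitting points has full measure then
there is a sequence `c m → 1` with `μ (B m) ≥ c m / m` for all `m ≥ 1`; equivalently,
`liminf m·μ (B m) ≥ 1`. -/
theorem eah_full_necessary {X : Type*} [MeasurableSpace X]
    (μ : Measure X) [IsProbabilityMeasure μ] (T : X → X)
    (hT : MeasurePreserving T μ μ)
    (B : ℕ → Set X) (hmeas : ∀ m, MeasurableSet (B m))
    (hlim : Tendsto (fun m => μ (B m)) atTop (nhds 0))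
    (hfull : μ (eahSet T B) = 1) :
    (∃ c : ℕ → ℝ, Tendsto c atTop (nhds 1) ∧
      ∀ m : ℕ, 1 ≤ m → ENNReal.ofReal (c m / m) ≤ μ (B m)) ∧
    1 ≤ Filter.liminf (fun m : ℕ => (m : ℝ≥0∞) * μ (B m)) atTop := by
  set A : ℕ → Set X := fun n => {x | ∀ m : ℕ, n ≤ m → ∃ k : ℕ, k < m ∧ T^[k] x ∈ B m}
    with hA
  have hAmono : Monotone A := by
    intro a b hab x hx m hm
    exact hx m (hab.trans hm)
  have hUnion : eahSet T B = ⋃ n, A n := by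
    ext x; simp [eahSet, A, mem_iUnion]
  have hkey : ∀ n m : ℕ, n ≤ m → μ (A n) ≤ (m : ℝ≥0∞) * μ (B m) := by
    intro n m hnm
    have hsub : A n ⊆ ⋃ k ∈ Finset.range m, T^[k] ⁻¹' (B m) := by
      intro x hx
      obtain ⟨k, hk, hkB⟩ := hx m hnm
      exact mem_biUnion (Finset.mem_range.2 hk) hkB
    calc μ (A n) ≤ μ (⋃ k ∈ Finset.range m, T^[k] ⁻¹' (B m)) := measure_mono hsub
      _ ≤ ∑ k ∈ Finset.range m, μ (T^[k] ⁻¹' (B m)) := measure_biUnion_finset_le _ _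
      _ = (m : ℝ≥0∞) * μ (B m) := by
          have : ∀ k, μ (T^[k] ⁻¹' (B m)) = μ (B m) := fun k =>
            (hT.iterate k).measure_preimage (hmeas m).nullMeasurableSet
          simp [this, Finset.sum_const, nsmul_eq_mul]
  have hliminf : 1 ≤ Filter.liminf (fun m : ℕ => (m : ℝ≥0∞) * μ (B m)) atTop := by
    have h1 : ∀ n, μ (A n) ≤ Filter.liminf (fun m : ℕ => (m : ℝ≥0∞) * μ (B m)) atTop := by
      intro n
      exact le_liminf_of_le (by isBoundedDefault)
        (eventually_atTop.2 ⟨n, fun m hm => hkey n m hm⟩)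
    have hsup : μ (eahSet T B) = ⨆ n, μ (A n) := by
      rw [hUnion]
      exact hAmono.directed_le.measure_iUnion
    calc (1 : ℝ≥0∞) = ⨆ n, μ (A n) := by rw [← hsup, hfull]
      _ ≤ _ := iSup_le h1
  refine ⟨⟨fun m => min 1 ((m : ℝ) * (μ (B m)).toReal), ?_, ?_⟩, hliminf⟩
  · rw [tendsto_order]
    constructor
    · intro a ha
      rcases lt_or_ge a 0 with h0 | h0
      · refine Eventually.of_forall fun m => h0.trans_le ?_
        positivity
      · have hlt : ENNReal.ofReal a < Filter.liminf (fun m : ℕ => (m : ℝ≥0∞) * μ (B m)) atTop :=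
          lt_of_lt_of_le (by simpa [ENNReal.ofReal_lt_one] using ha) hliminf
        filter_upwards [eventually_lt_of_lt_liminf hlt] with m hm
        have hfin : (m : ℝ≥0∞) * μ (B m) ≠ ⊤ :=
          ENNReal.mul_ne_top (by simp) (measure_ne_top μ _)
        have : a < ((m : ℝ≥0∞) * μ (B m)).toReal :=
          (ENNReal.ofReal_lt_iff_lt_toReal h0 hfin).1 hm
        rw [ENNReal.toReal_mul, ENNReal.toReal_natCast] at this
        exact lt_min ha this
    · intro a ha
      exact Eventually.of_forall fun m => (min_le_left _ _).trans_lt ha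
  · intro m hm
    have hmpos : (0 : ℝ) < m := by exact_mod_cast hm
    have h1 : min 1 ((m : ℝ) * (μ (B m)).toReal) / m ≤ (μ (B m)).toReal := by
      rw [div_le_iff₀ hmpos]
      calc min 1 ((m : ℝ) * (μ (B m)).toReal) ≤ (m : ℝ) * (μ (B m)).toReal := min_le_right _ _
        _ = (μ (B m)).toReal * m := by ring
    calc ENNReal.ofReal (min 1 ((m : ℝ) * (μ (B m)).toReal) / m)
        ≤ ENNReal.ofReal (μ (B m)).toReal := ENNReal.ofReal_le_ofReal h1
      _ = μ (B m) := ENNReal.ofReal_toReal (measure_ne_top μ _)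
end

section
/- Let (X, μ, T) be a measure-preserving dynamical system with μ an infinite (σ-finite) measure, and let (B_m)_{m≥1} be measurable targets with μ(B_m) → 0. If μ(E_ah) = ∞, then there exists a sequence c_m → ∞ such that μ(B_m) ≥ c_m/m for all m; equivalently, m·μ(B_m) → ∞. -/
open MeasureTheory Filter Set
open scoped ENNReal

/-- For a measure-preserving system with an infinite σ-finite measure and targets
satisfying `μ (B m) → 0`, if the set of eventually always hitting points has infinite
measure then there is a sequence `c m → ∞` with `μ (B m) ≥ c m / m` for all `m ≥ 1`;
equivalently, `m·μ (B m) → ∞`. -/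
theorem eah_infinite_necessary {X : Type*} [MeasurableSpace X]
    (μ : Measure X) [SigmaFinite μ] (hinf : μ Set.univ = ∞)
    (T : X → X) (hT : MeasurePreserving T μ μ)
    (B : ℕ → Set X) (hmeas : ∀ m, MeasurableSet (B m))
    (hlim : Tendsto (fun m => μ (B m)) atTop (nhds 0))
    (hfull : μ (eahSet T B) = ∞) :
    (∃ c : ℕ → ℝ, Tendsto c atTop atTop ∧
      ∀ m : ℕ, 1 ≤ m → ENNReal.ofReal (c m / m) ≤ μ (B m)) ∧
    Tendsto (fun m : ℕ => (m : ℝ≥0∞) * μ (B m)) atTop (nhds ∞) := by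
  set U : ℕ → Set X := fun m => ⋃ k ∈ Finset.range m, T^[k] ⁻¹' B m with hU
  have hUm : ∀ m, μ (U m) ≤ m * μ (B m) := by
    intro m
    calc μ (U m) ≤ ∑ k ∈ Finset.range m, μ (T^[k] ⁻¹' B m) :=
          measure_biUnion_finset_le _ _
    _ = ∑ k ∈ Finset.range m, μ (B m) := by
        refine Finset.sum_congr rfl fun k _ => ?_
        exact (hT.iterate k).measure_preimage (hmeas m).nullMeasurableSet
    _ = m * μ (B m) := by simp [Finset.sum_const, mul_comm]
  set A : ℕ → Set X := fun n => ⋂ m, ⋂ (_ : n ≤ m), U m with hA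
  have hAsub : ∀ n m, n ≤ m → A n ⊆ U m := fun n m hm => biInter_subset_of_mem hm
  have hAmono : Monotone A := by
    intro a b hab
    exact iInter₂_mono' fun m hm => ⟨m, hab.trans hm, subset_rfl⟩
  have hE : eahSet T B = ⋃ n, A n := by
    ext x
    simp [eahSet, hA, hU, Set.mem_iUnion, Set.mem_iInter, Finset.mem_range]
  have hsup : (⨆ n, μ (A n)) = ∞ := by
    rw [← Directed.measure_iUnion hAmono.directed_le, ← hE, hfull]
  have key : ∀ N : ℕ, ∀ᶠ m : ℕ in atTop, (N : ℝ≥0∞) < (m : ℝ≥0∞) * μ (B m) := by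
    intro N
    have hlt : (N : ℝ≥0∞) < ⨆ n, μ (A n) := by
      rw [hsup]; exact ENNReal.natCast_lt_top N
    obtain ⟨n, hn⟩ := lt_iSup_iff.mp hlt
    filter_upwards [eventually_ge_atTop n] with m hm
    exact hn.trans_le ((measure_mono (hAsub n m hm)).trans (hUm m))
  have htend : Tendsto (fun m : ℕ => (m : ℝ≥0∞) * μ (B m)) atTop (nhds ∞) :=
    ENNReal.tendsto_nhds_top key
  refine ⟨⟨fun m => if μ (B m) = ∞ then (m : ℝ) else min (m : ℝ) ((m * μ (B m)).toReal),
      ?_, ?_⟩, htend⟩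
  · rw [tendsto_atTop]
    intro M
    have h1 : ∀ᶠ m : ℕ in atTop, M ≤ (m : ℝ) :=
      tendsto_natCast_atTop_atTop.eventually_ge_atTop M
    filter_upwards [h1, key ⌈M⌉₊] with m hm hkey
    by_cases h : μ (B m) = ∞
    · simpa [h] using hm
    · have hfin : (m : ℝ≥0∞) * μ (B m) ≠ ∞ := ENNReal.mul_ne_top (by simp) h
      have : (⌈M⌉₊ : ℝ) ≤ ((m : ℝ≥0∞) * μ (B m)).toReal := by
        have := ENNReal.toReal_mono hfin hkey.le
        simpa using this
      have h2 : M ≤ ((m : ℝ≥0∞) * μ (B m)).toReal := (Nat.le_ceil M).trans this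
      simp only [h, if_false]
      exact le_min hm h2
  · intro m hm
    by_cases h : μ (B m) = ∞
    · simp [h]
    · simp only [h, if_false]
      have hm0 : (0 : ℝ) < m := by exact_mod_cast hm
      have hfin : (m : ℝ≥0∞) * μ (B m) ≠ ∞ := ENNReal.mul_ne_top (by simp) h
      have step1 : ENNReal.ofReal (min (m : ℝ) (((m : ℝ≥0∞) * μ (B m)).toReal) / m)
          ≤ ENNReal.ofReal (((m : ℝ≥0∞) * μ (B m)).toReal / m) :=
        ENNReal.ofReal_le_ofReal (div_le_div_of_nonneg_right (min_le_right _ _) hm0.le)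
      refine step1.trans_eq ?_
      rw [ENNReal.ofReal_div_of_pos hm0, ENNReal.ofReal_toReal hfin,
        ENNReal.ofReal_natCast]
      rw [mul_comm, mul_div_assoc, ENNReal.div_self (by exact_mod_cast hm0.ne' : (m:ℝ≥0∞) ≠ 0) (by simp), mul_one]
end

section
/- Let (X, μ, T) be an ergodic measure-preserving dynamical system with μ a probability measure, and let (B_m)_{m≥1} be a nested sequence of measurable targets with μ(B_m) → 0. If there exists c < 1 such that μ(B_m) ≤ c/m holds for infinitely many m, then μ(E_ah) = 0. -/
open MeasureTheory Filter Set
open scoped ENNReal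

/-- For an ergodic probability-measure-preserving system and a nested sequence of
measurable targets with `μ (B m) → 0`: if there is `c < 1` with `μ (B m) ≤ c / m` for
infinitely many `m`, then the set of eventually always hitting points has measure
zero. -/
theorem eah_zero_sufficient_finite {X : Type*} [MeasurableSpace X]
    (μ : Measure X) [IsProbabilityMeasure μ] (T : X → X) (hT : Ergodic T μ)
    (B : ℕ → Set X) (hmeas : ∀ m, MeasurableSet (B m))
    (hnested : ∀ m, B (m + 1) ⊆ B m)
    (hlim : Tendsto (fun m => μ (B m)) atTop (nhds 0))
    (hc : ∃ c : ℝ, c < 1 ∧ ∃ᶠ m : ℕ in atTop, μ (B m) ≤ ENNReal.ofReal (c / m)) :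
    μ (eahSet T B) = 0 := by
  obtain ⟨c, hc1, hcf⟩ := hc
  have hanti : Antitone B := antitone_nat_of_succ_le hnested
  set c' : ℝ := max c 0 with hc'def
  have hc'1 : c' < 1 := max_lt hc1 one_pos
  have hc'0 : 0 ≤ c' := le_max_right _ _
  have hmT : Measurable T := hT.toMeasurePreserving.measurable
  set A : ℕ → Set X := fun m => ⋃ k ∈ Finset.range m, T^[k] ⁻¹' B m with hA
  have hAmeas : ∀ m, MeasurableSet (A m) := fun m =>
    MeasurableSet.biUnion (Finset.range m).countable_toSet
      (fun k _ => (hmT.iterate k) (hmeas m))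
  set E : ℕ → Set X := fun n => ⋂ m, ⋂ (_ : n ≤ m), A m with hE
  have hEmeas : ∀ n, MeasurableSet (E n) := fun n =>
    MeasurableSet.iInter fun m => MeasurableSet.iInter fun _ => hAmeas m
  have hmemA : ∀ m x, x ∈ A m ↔ ∃ k : ℕ, k < m ∧ T^[k] x ∈ B m := by
    intro m x
    simp [hA, Finset.mem_range]
  have hEeq : eahSet T B = ⋃ n, E n := by
    ext x
    simp only [eahSet, mem_setOf_eq, mem_iUnion, hE, mem_iInter, hmemA]
  have hEahMeas : MeasurableSet (eahSet T B) := by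
    rw [hEeq]; exact MeasurableSet.iUnion hEmeas
  -- bound on the measure of A m for good m
  have hAbound : ∀ m : ℕ, 1 ≤ m → μ (B m) ≤ ENNReal.ofReal (c / m) →
      μ (A m) ≤ ENNReal.ofReal c' := by
    intro m hm1 hmb
    have h2 : ∀ k : ℕ, μ (T^[k] ⁻¹' B m) = μ (B m) := fun k =>
      (hT.toMeasurePreserving.iterate k).measure_preimage (hmeas m).nullMeasurableSet
    have hmpos : (0 : ℝ) < m := by exact_mod_cast hm1
    have h4 : μ (B m) ≤ ENNReal.ofReal (c' / m) := by
      refine hmb.trans (ENNReal.ofReal_le_ofReal ?_)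
      gcongr
      exact le_max_left _ _
    have h5 : (m : ℝ≥0∞) * ENNReal.ofReal (c' / m) = ENNReal.ofReal c' := by
      rw [← ENNReal.ofReal_natCast m, ← ENNReal.ofReal_mul (by positivity)]
      congr 1
      field_simp
    calc μ (A m) ≤ ∑ k ∈ Finset.range m, μ (T^[k] ⁻¹' B m) :=
          measure_biUnion_finset_le _ _
      _ = ∑ _k ∈ Finset.range m, μ (B m) := by simp [h2]
      _ = (m : ℝ≥0∞) * μ (B m) := by simp [Finset.sum_const, mul_comm]
      _ ≤ (m : ℝ≥0∞) * ENNReal.ofReal (c' / m) := by gcongr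
      _ = ENNReal.ofReal c' := h5
  -- bound on measure of E n, hence of eahSet
  have hEbound : ∀ n, μ (E n) ≤ ENNReal.ofReal c' := by
    intro n
    obtain ⟨m, hmb, hmn⟩ := (hcf.and_eventually (eventually_ge_atTop (max n 1))).exists
    have h1m : 1 ≤ m := le_trans (le_max_right _ _) hmn
    have hnm : n ≤ m := le_trans (le_max_left _ _) hmn
    refine le_trans (measure_mono ?_) (hAbound m h1m hmb)
    intro x hx
    exact mem_iInter.mp (mem_iInter.mp hx m) hnm
  have hEahBound : μ (eahSet T B) ≤ ENNReal.ofReal c' := by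
    rw [hEeq]
    have hmono : Monotone E := by
      intro a b hab x hx
      simp only [hE, mem_iInter] at hx ⊢
      exact fun m hm => hx m (hab.trans hm)
    rw [hmono.directed_le.measure_iUnion]
    exact iSup_le hEbound
  -- the intersection of all B m is null
  have hNnull : μ (⋂ m, B m) = 0 := by
    have h1 : μ (⋂ m, B m) ≤ 0 :=
      ge_of_tendsto hlim (Eventually.of_forall fun m => measure_mono (iInter_subset _ m))
    exact le_antisymm h1 zero_le'
  -- almost-everywhere invariance: eahSet ≤ᵐ T ⁻¹' eahSet
  have hainv : eahSet T B ≤ᵐ[μ] T ⁻¹' (eahSet T B) := by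
    rw [ae_le_set]
    refine measure_mono_null ?_ hNnull
    intro x hx
    simp only [mem_diff, mem_preimage] at hx
    obtain ⟨⟨m₀, hm₀⟩, hnx⟩ := hx
    by_contra hxN
    rw [mem_iInter] at hxN
    push_neg at hxN
    obtain ⟨m₁, hm₁⟩ := hxN
    refine hnx ⟨max m₀ m₁, fun m hm => ?_⟩
    obtain ⟨k, hk, hkB⟩ := hm₀ (m + 1) (le_trans (le_max_left _ _) (hm.trans (Nat.le_succ m)))
    match k with
    | 0 =>
      exfalso
      exact hm₁ (hanti (le_trans (le_trans (le_max_right _ _) hm) (Nat.le_succ m)) hkB)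
    | k + 1 =>
      refine ⟨k, Nat.lt_of_succ_lt_succ hk, ?_⟩
      rw [← Function.iterate_succ_apply]
      exact hnested m hkB
  -- conclude by ergodicity
  rcases hT.ae_empty_or_univ_of_ae_le_preimage hEahMeas.nullMeasurableSet hainv with h | h
  · have := measure_congr h
    simpa using this
  · exfalso
    have h1 : μ (eahSet T B) = 1 := by
      rw [measure_congr h]; simp
    rw [h1] at hEahBound
    exact absurd (hEahBound.trans_lt (ENNReal.ofReal_lt_one.mpr hc'1)) (lt_irrefl _)
end

section
/- Let (X, μ, T) be an ergodic measure-preserving dynamical system with μ an infinite (σ-finite) measure, and let (B_m)_{m≥1} be a nested sequence of measurable targets with μ(B_m) → 0. If there exists c ∈ ℝ such that μ(B_m) ≤ c/m holds for infinitely many m, then μ(E_ah) = 0. -/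
open MeasureTheory Filter Set
open scoped ENNReal

/-- For an ergodic measure-preserving system with an infinite σ-finite measure and a
nested sequence of measurable targets with `μ (B m) → 0`: if there is `c ∈ ℝ` with
`μ (B m) ≤ c / m` for infinitely many `m`, then the set of eventually always hitting
points has measure zero. -/
theorem eah_zero_sufficient_infinite {X : Type*} [MeasurableSpace X]
    (μ : Measure X) [SigmaFinite μ] (hinf : μ Set.univ = ∞)
    (T : X → X) (hT : Ergodic T μ)
    (B : ℕ → Set X) (hmeas : ∀ m, MeasurableSet (B m))
    (hnested : ∀ m, B (m + 1) ⊆ B m)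
    (hlim : Tendsto (fun m => μ (B m)) atTop (nhds 0))
    (hc : ∃ c : ℝ, ∃ᶠ m : ℕ in atTop, μ (B m) ≤ ENNReal.ofReal (c / m)) :
    μ (eahSet T B) = 0 := by
  obtain ⟨c, hc⟩ := hc
  have hTmeas : Measurable T := hT.toMeasurePreserving.measurable
  have hAnti : Antitone B := antitone_nat_of_succ_le hnested
  set A : ℕ → Set X := fun n =>
    ⋂ m, ⋂ (_ : n ≤ m), ⋃ k, ⋃ (_ : k < m), T^[k] ⁻¹' B m with hA
  have hE_eq : eahSet T B = ⋃ n, A n := by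
    ext x
    simp [eahSet, hA, mem_iInter, mem_iUnion]
  have hAmeas : ∀ n, MeasurableSet (A n) := fun n =>
    MeasurableSet.iInter fun m => MeasurableSet.iInter fun _ =>
      MeasurableSet.iUnion fun k => MeasurableSet.iUnion fun _ =>
        (hTmeas.iterate k) (hmeas m)
  have hEmeas : MeasurableSet (eahSet T B) := by
    rw [hE_eq]; exact MeasurableSet.iUnion hAmeas
  -- bound the measure of each A n
  have hA_bound : ∀ n, μ (A n) ≤ ENNReal.ofReal c := by
    intro n
    obtain ⟨m, hm, hμm⟩ := (hc.and_eventually (eventually_ge_atTop (max n 1))).exists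
    have hmn : n ≤ m := le_trans (le_max_left _ _) hμm
    have hm1 : 1 ≤ m := le_trans (le_max_right _ _) hμm
    have hsub : A n ⊆ ⋃ k ∈ Finset.range m, T^[k] ⁻¹' B m := by
      intro x hx
      have := mem_iInter.1 (mem_iInter.1 hx m) hmn
      obtain ⟨k, hk⟩ := mem_iUnion.1 this
      obtain ⟨hkm, hkx⟩ := mem_iUnion.1 hk
      exact mem_biUnion (Finset.mem_range.2 hkm) hkx
    calc μ (A n) ≤ μ (⋃ k ∈ Finset.range m, T^[k] ⁻¹' B m) := measure_mono hsub
      _ ≤ ∑ k ∈ Finset.range m, μ (T^[k] ⁻¹' B m) := measure_biUnion_finset_le _ _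
      _ = ∑ k ∈ Finset.range m, μ (B m) := by
          refine Finset.sum_congr rfl fun k _ => ?_
          exact (hT.toMeasurePreserving.iterate k).measure_preimage
            (hmeas m).nullMeasurableSet
      _ = (m : ℝ≥0∞) * μ (B m) := by simp [mul_comm]
      _ ≤ (m : ℝ≥0∞) * ENNReal.ofReal (c / m) := by gcongr
      _ = ENNReal.ofReal c := by
          rw [← ENNReal.ofReal_natCast m, ← ENNReal.ofReal_mul (by positivity)]
          congr 1
          field_simp
  have hEfin : μ (eahSet T B) ≤ ENNReal.ofReal c := by
    rw [hE_eq]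
    rw [Directed.measure_iUnion]
    · exact iSup_le hA_bound
    · refine Monotone.directed_le fun a b hab => ?_
      intro x hx
      exact mem_iInter.2 fun m => mem_iInter.2 fun hbm =>
        mem_iInter.1 (mem_iInter.1 hx m) (hab.trans hbm)
  -- the difference eahSet \ T⁻¹ eahSet is contained in ⋂ B m
  have hdiff : eahSet T B \ T ⁻¹' eahSet T B ⊆ ⋂ m, B m := by
    rintro x ⟨⟨m₀, hx⟩, hnx⟩
    simp only [mem_preimage, eahSet, mem_setOf_eq] at hnx
    push_neg at hnx
    refine mem_iInter.2 fun j => ?_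
    obtain ⟨m, hm, hfail⟩ := hnx (max m₀ j)
    have hm₀ : m₀ ≤ m := le_trans (le_max_left _ _) hm
    have hjm : j ≤ m := le_trans (le_max_right _ _) hm
    obtain ⟨k, hk, hkx⟩ := hx (m + 1) (by omega)
    rcases Nat.eq_zero_or_pos k with rfl | hkpos
    · exact hAnti hjm (hnested m hkx)
    · exfalso
      have hiter : T^[k - 1] (T x) = T^[k] x := by
        rw [← Function.iterate_succ_apply]
        congr 1
        omega
      have : T^[k - 1] (T x) ∈ B m := by
        rw [hiter]
        exact hnested m hkx
      exact hfail (k - 1) (by omega) this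
  -- the tail intersection is null
  have hnull : μ (⋂ m, B m) = 0 := by
    have : μ (⋂ m, B m) ≤ 0 :=
      ge_of_tendsto' hlim fun m => measure_mono (iInter_subset B m)
    exact le_antisymm this zero_le
  have hle : eahSet T B ≤ᵐ[μ] T ⁻¹' eahSet T B :=
    ae_le_set.2 (measure_mono_null hdiff hnull)
  rcases hT.ae_empty_or_univ_of_ae_le_preimage' hEmeas.nullMeasurableSet hle
      (by
        intro h
        rw [h] at hEfin
        exact (hEfin.trans_lt ENNReal.ofReal_lt_top).ne rfl) with h | h
  · simpa using measure_congr h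
  · exfalso
    have : μ (eahSet T B) = μ Set.univ := measure_congr h
    rw [hinf] at this
    exact (hEfin.trans_lt ENNReal.ofReal_lt_top).ne this
end
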